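/- arXiv:1704.04254 — 6 statements merged into one kernel-verified Lean document; each statement's English description precedes it below -/
import Mathlib

section
/- Let 0 < d < π/4, λ₁ > 0 and 0 < b < λ₁/√2. There exists a constant C > 0, depending only on λ₁, b and d, such that for every real λ ≥ λ₁ and every y ∈ ℂ with |Im y| ≤ d one has |z(y) − λ| ≥ C. -/
/-- Two-parameter Mittag-Leffler function `e_{γ,μ}(z) = ∑ₖ zᵏ / Γ(kγ+μ)`,
with the reciprocal Gamma interpreted as `0` at non-positive integers. -/
noncomputable def mlf (γ μ : ℝ) (z : ℂ) : ℂ :=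
  ∑' k : ℕ, (Complex.Gamma (((k : ℝ) * γ + μ : ℝ) : ℂ))⁻¹ * z ^ k

/-- Hyperbolic contour `z(y) = b (cosh y + i sinh y)`. -/
noncomputable def zc (b : ℝ) (y : ℂ) : ℂ :=
  (b : ℂ) * (Complex.cosh y + Complex.I * Complex.sinh y)

/-- Derivative of the hyperbolic contour, `z'(y) = b (sinh y + i cosh y)`. -/
noncomputable def zcDeriv (b : ℝ) (y : ℂ) : ℂ :=
  (b : ℂ) * (Complex.sinh y + Complex.I * Complex.cosh y)

lemma zc_eq' (b a c : ℝ) :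
    zc b ((a : ℂ) + (c : ℂ) * Complex.I)
      = ((b * (Real.cosh a * (Real.cos c - Real.sin c)) : ℝ) : ℂ)
      + ((b * (Real.sinh a * (Real.cos c + Real.sin c)) : ℝ) : ℂ) * Complex.I := by
  rw [zc, Complex.cosh_add, Complex.sinh_add, Complex.cosh_mul_I, Complex.sinh_mul_I]
  push_cast
  rw [← Complex.ofReal_cosh, ← Complex.ofReal_sinh, ← Complex.ofReal_cos, ← Complex.ofReal_sin]
  linear_combination ((b : ℂ) * Real.cosh a * Real.sin c) * Complex.I_sq

lemma zc_eq (b : ℝ) (y : ℂ) :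
    zc b y = ((b * (Real.cosh y.re * (Real.cos y.im - Real.sin y.im)) : ℝ) : ℂ)
      + ((b * (Real.sinh y.re * (Real.cos y.im + Real.sin y.im)) : ℝ) : ℂ) * Complex.I := by
  have := zc_eq' b y.re y.im
  rwa [Complex.re_add_im] at this

/-- for `0 < d < π/4`, `λ₁ > 0`, `0 < b < λ₁/√2`, there is `C > 0`
(depending only on `λ₁, b, d`) with `|z(y) - λ| ≥ C` for all `λ ≥ λ₁` and all
`y` in the closed strip `|Im y| ≤ d`. -/
theorem stmt0 (d lam1 b : ℝ) (hd : 0 < d) (hd' : d < Real.pi / 4)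
    (hlam1 : 0 < lam1) (hb : 0 < b) (hb' : b < lam1 / Real.sqrt 2) :
    ∃ C : ℝ, 0 < C ∧ ∀ lam : ℝ, lam1 ≤ lam → ∀ y : ℂ, |y.im| ≤ d →
      C ≤ ‖zc b y - (lam : ℂ)‖ := by
  have hpi := Real.pi_pos
  have h2 : (0:ℝ) < Real.sqrt 2 := by positivity
  have h2sq : Real.sqrt 2 * Real.sqrt 2 = 2 := Real.mul_self_sqrt (by norm_num)
  have hsb : Real.sqrt 2 * b < lam1 := by
    rw [lt_div_iff₀ h2] at hb'; linarith [hb']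
  set ε : ℝ := (lam1 - Real.sqrt 2 * b) / 2 with hεdef
  have hεpos : 0 < ε := by simp only [hεdef]; linarith
  have hsbpos : 0 < Real.sqrt 2 * b := by positivity
  set K : ℝ := (lam1 + Real.sqrt 2 * b) / (2 * (Real.sqrt 2 * b)) with hKdef
  have hK1 : 1 < K := by
    rw [hKdef, lt_div_iff₀ (by positivity)]; linarith
  have hKsq : 0 < K ^ 2 - 1 := by nlinarith
  have hcd : 0 < Real.cos d - Real.sin d := by
    have h1 : Real.sin d < Real.sin (Real.pi / 2 - d) :=
      Real.sin_lt_sin_of_lt_of_le_pi_div_two (by linarith) (by linarith) (by linarith)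
    rw [Real.sin_pi_div_two_sub] at h1; linarith
  set C2 : ℝ := b * Real.sqrt (K ^ 2 - 1) * (Real.cos d - Real.sin d) with hC2def
  have hC2 : 0 < C2 := by
    have := Real.sqrt_pos.mpr hKsq
    positivity
  refine ⟨min ε C2, lt_min hεpos hC2, ?_⟩
  intro lam hlam y hy
  set x := y.re with hx
  set v := y.im with hv
  have hre : (zc b y - (lam : ℂ)).re = b * (Real.cosh x * (Real.cos v - Real.sin v)) - lam := by
    rw [Complex.sub_re, zc_eq]
    simp only [Complex.add_re, Complex.mul_re, Complex.ofReal_re, Complex.ofReal_im,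
      Complex.I_re, Complex.I_im, Complex.sub_re]
    ring
  have him : (zc b y - (lam : ℂ)).im = b * (Real.sinh x * (Real.cos v + Real.sin v)) := by
    rw [Complex.sub_im, zc_eq]
    simp only [Complex.add_im, Complex.mul_im, Complex.ofReal_re, Complex.ofReal_im,
      Complex.I_re, Complex.I_im, Complex.sub_im]
    ring
  -- trig bounds
  have habs := abs_le.mp hy
  have hcos : Real.cos d ≤ Real.cos v := by
    rw [show Real.cos v = Real.cos |v| from (Real.cos_abs v).symm]
    exact Real.cos_le_cos_of_nonneg_of_le_pi (abs_nonneg v) (by linarith) hy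
  have hsin : -Real.sin d ≤ Real.sin v := by
    have := Real.sin_le_sin_of_le_of_le_pi_div_two (x := -d) (y := v)
      (by linarith) (by linarith [habs.2]) habs.1
    rwa [Real.sin_neg] at this
  have hsum : Real.cos d - Real.sin d ≤ Real.cos v + Real.sin v := by linarith
  have hdiff : Real.cos v - Real.sin v ≤ Real.sqrt 2 := by
    have hpy := Real.sin_sq_add_cos_sq v
    nlinarith [sq_nonneg (Real.cos v + Real.sin v), sq_nonneg (Real.cos v - Real.sin v - Real.sqrt 2)]
  have hch : 0 < Real.cosh x := Real.cosh_pos x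
  by_cases hcase : Real.cosh x ≤ (lam - ε) / (Real.sqrt 2 * b)
  · -- real part is ≤ -ε
    have h1 : Real.cosh x * (Real.sqrt 2 * b) ≤ lam - ε := (le_div_iff₀ hsbpos).mp hcase
    have h2a : (b * Real.cosh x) * (Real.cos v - Real.sin v) ≤ (b * Real.cosh x) * Real.sqrt 2 :=
      mul_le_mul_of_nonneg_left hdiff (le_of_lt (mul_pos hb hch))
    have h2b : (b * Real.cosh x) * Real.sqrt 2 = Real.cosh x * (Real.sqrt 2 * b) := by ring
    have h2c : b * (Real.cosh x * (Real.cos v - Real.sin v))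
        = (b * Real.cosh x) * (Real.cos v - Real.sin v) := by ring
    have h3 : (zc b y - (lam : ℂ)).re ≤ -ε := by rw [hre]; linarith
    calc min ε C2 ≤ ε := min_le_left _ _
      _ ≤ |(zc b y - (lam : ℂ)).re| := le_abs.mpr (Or.inr (by linarith))
      _ ≤ ‖zc b y - (lam : ℂ)‖ := Complex.abs_re_le_norm _
  · push_neg at hcase
    have hK' : K ≤ Real.cosh x := by
      have h1 : K = (lam1 - ε) / (Real.sqrt 2 * b) := by
        rw [hKdef, hεdef]; field_simp; ring
      have h2' : (lam1 - ε) / (Real.sqrt 2 * b) ≤ (lam - ε) / (Real.sqrt 2 * b) := by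
        gcongr
      rw [h1]
      exact le_trans h2' hcase.le
    have hsinh : Real.sqrt (K ^ 2 - 1) ≤ |Real.sinh x| := by
      rw [← Real.sqrt_sq_eq_abs]
      apply Real.sqrt_le_sqrt
      have hK2 : K ^ 2 ≤ Real.cosh x ^ 2 := pow_le_pow_left₀ (by linarith) hK' 2
      linarith [Real.cosh_sq x]
    have hnn : 0 ≤ Real.cos v + Real.sin v := by linarith
    have hkey : Real.sqrt (K ^ 2 - 1) * (Real.cos d - Real.sin d)
        ≤ |Real.sinh x| * (Real.cos v + Real.sin v) :=
      mul_le_mul hsinh hsum hcd.le (abs_nonneg _)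
    have h1 : C2 ≤ |(zc b y - (lam : ℂ)).im| := by
      rw [him]
      calc C2 = b * (Real.sqrt (K ^ 2 - 1) * (Real.cos d - Real.sin d)) := by
            rw [hC2def]; ring
        _ ≤ b * (|Real.sinh x| * (Real.cos v + Real.sin v)) :=
            mul_le_mul_of_nonneg_left hkey hb.le
        _ = |b * (Real.sinh x * (Real.cos v + Real.sin v))| := by
            rw [abs_mul, abs_mul, abs_of_nonneg hb.le, abs_of_nonneg hnn]
    calc min ε C2 ≤ C2 := min_le_right _ _
      _ ≤ |(zc b y - (lam : ℂ)).im| := h1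
      _ ≤ ‖zc b y - (lam : ℂ)‖ := Complex.abs_im_le_norm _
end

section
/- Let γ, β ∈ (0,1), 0 < d < π/4, λ₁ > 0 and 0 < b < λ₁/√2. Assume there is a constant C₀ > 0 such that |e_{γ,1}(w)| ≤ C₀/(1+|w|) for every w ∈ ℂ with Re w ≤ 0. Then there exists a constant C > 0, depending only on γ, β, d, b, λ₁ and C₀, such that for every t > 0, every real λ ≥ λ₁ and every y ∈ ℂ with |Im y| ≤ d one has |g_λ(y,t)| ≤ C · t^{−γ} · e^{−β|Re y|}. -/
/-- The function `g_λ(y,t) = e_{γ,1}(-t^γ z(y)^β) · z'(y) · (z(y) - λ)⁻¹`. -/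
noncomputable def gfun (γ β b t lam : ℝ) (y : ℂ) : ℂ :=
  mlf γ 1 (-(((t ^ γ : ℝ) : ℂ) * zc b y ^ (β : ℂ))) * zcDeriv b y * (zc b y - (lam : ℂ))⁻¹

lemma zc_re (b:ℝ)(y:ℂ) : (zc b y).re = b * (Real.cosh y.re * (Real.cos y.im - Real.sin y.im)) := by
  conv_lhs => rw [zc, show y = (y.re:ℂ) + (y.im:ℂ)*Complex.I from (Complex.re_add_im y).symm]
  rw [Complex.cosh_add, Complex.sinh_add, Complex.cosh_mul_I, Complex.sinh_mul_I,
      ← Complex.ofReal_cosh, ← Complex.ofReal_sinh]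
  simp [Complex.mul_re, Complex.mul_im, Complex.cos_ofReal_re, Complex.sin_ofReal_re,
    Complex.cos_ofReal_im, Complex.sin_ofReal_im, Complex.sinh_ofReal_re, Complex.cosh_ofReal_re, mul_comm]
  exact Or.inl (by ring)

lemma zc_im (b:ℝ)(y:ℂ) : (zc b y).im = b * (Real.sinh y.re * (Real.cos y.im + Real.sin y.im)) := by
  conv_lhs => rw [zc, show y = (y.re:ℂ) + (y.im:ℂ)*Complex.I from (Complex.re_add_im y).symm]
  rw [Complex.cosh_add, Complex.sinh_add, Complex.cosh_mul_I, Complex.sinh_mul_I,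
      ← Complex.ofReal_cosh, ← Complex.ofReal_sinh]
  simp [Complex.mul_re, Complex.mul_im, Complex.cos_ofReal_re, Complex.sin_ofReal_re,
    Complex.cos_ofReal_im, Complex.sin_ofReal_im, Complex.sinh_ofReal_re, Complex.cosh_ofReal_re, mul_comm]
  exact Or.inl (by ring)

lemma zcD_re (b:ℝ)(y:ℂ) : (zcDeriv b y).re = b * (Real.sinh y.re * (Real.cos y.im - Real.sin y.im)) := by
  conv_lhs => rw [zcDeriv, show y = (y.re:ℂ) + (y.im:ℂ)*Complex.I from (Complex.re_add_im y).symm]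
  rw [Complex.cosh_add, Complex.sinh_add, Complex.cosh_mul_I, Complex.sinh_mul_I,
      ← Complex.ofReal_cosh, ← Complex.ofReal_sinh]
  simp [Complex.mul_re, Complex.mul_im, Complex.cos_ofReal_re, Complex.sin_ofReal_re,
    Complex.cos_ofReal_im, Complex.sin_ofReal_im, Complex.sinh_ofReal_re, Complex.cosh_ofReal_re, mul_comm]
  exact Or.inl (by ring)

lemma zcD_im (b:ℝ)(y:ℂ) : (zcDeriv b y).im = b * (Real.cosh y.re * (Real.cos y.im + Real.sin y.im)) := by
  conv_lhs => rw [zcDeriv, show y = (y.re:ℂ) + (y.im:ℂ)*Complex.I from (Complex.re_add_im y).symm]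
  rw [Complex.cosh_add, Complex.sinh_add, Complex.cosh_mul_I, Complex.sinh_mul_I,
      ← Complex.ofReal_cosh, ← Complex.ofReal_sinh]
  simp [Complex.mul_re, Complex.mul_im, Complex.cos_ofReal_re, Complex.sin_ofReal_re,
    Complex.cos_ofReal_im, Complex.sin_ofReal_im, Complex.sinh_ofReal_re, Complex.cosh_ofReal_re, mul_comm]
  exact Or.inl (by ring)

lemma my_sinh_abs (x : ℝ) : Real.sinh |x| = |Real.sinh x| := by
  rcases le_total 0 x with h | h
  · rw [abs_of_nonneg h, abs_of_nonneg (Real.sinh_nonneg_iff.mpr h)]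
  · rw [abs_of_nonpos h, Real.sinh_neg, abs_of_nonpos (Real.sinh_nonpos_iff.mpr h)]

lemma my_exp_abs (x : ℝ) : Real.exp |x| = Real.cosh x + |Real.sinh x| := by
  rw [← Real.cosh_abs, ← my_sinh_abs, Real.cosh_add_sinh]

set_option maxHeartbeats 1000000 in
/-- bound `|g_λ(y,t)| ≤ C t^{-γ} e^{-β|Re y|}` on the closed strip. -/
theorem stmt3 (γ β d lam1 b C₀ : ℝ) (hγ : γ ∈ Set.Ioo (0 : ℝ) 1)
    (hβ : β ∈ Set.Ioo (0 : ℝ) 1) (hd : 0 < d) (hd' : d < Real.pi / 4)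
    (hlam1 : 0 < lam1) (hb : 0 < b) (hb' : b < lam1 / Real.sqrt 2) (hC₀ : 0 < C₀)
    (hml : ∀ w : ℂ, w.re ≤ 0 → ‖mlf γ 1 w‖ ≤ C₀ / (1 + ‖w‖)) :
    ∃ C : ℝ, 0 < C ∧ ∀ t : ℝ, 0 < t → ∀ lam : ℝ, lam1 ≤ lam → ∀ y : ℂ, |y.im| ≤ d →
      ‖gfun γ β b t lam y‖ ≤ C * t ^ (-γ) * Real.exp (-β * |y.re|) := by
  obtain ⟨hγ0, hγ1⟩ := hγ
  obtain ⟨hβ0, hβ1⟩ := hβ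
  have hpi : (0:ℝ) < Real.pi := Real.pi_pos
  have hsqrt2 : (0:ℝ) < Real.sqrt 2 := Real.sqrt_pos.mpr (by norm_num)
  have hsq2 : Real.sqrt 2 ^ 2 = 2 := Real.sq_sqrt (by norm_num)
  have hsqrt2le : Real.sqrt 2 ≤ 2 := by
    calc Real.sqrt 2 ≤ Real.sqrt 4 := Real.sqrt_le_sqrt (by norm_num)
      _ = 2 := by
          rw [show (4:ℝ) = 2 ^ 2 by norm_num, Real.sqrt_sq (by norm_num : (0:ℝ) ≤ 2)]
  have hsb : b * Real.sqrt 2 < lam1 := (lt_div_iff₀ hsqrt2).mp hb'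
  obtain ⟨a, ha_def⟩ : ∃ a : ℝ, a = Real.cos d - Real.sin d := ⟨_, rfl⟩
  have hdpi2 : d < Real.pi / 2 := by linarith
  have ha : 0 < a := by
    have h1 : Real.cos (Real.pi / 2 - d) < Real.cos d :=
      Real.cos_lt_cos_of_nonneg_of_le_pi hd.le (by linarith) (by linarith)
    rw [Real.cos_pi_div_two_sub] at h1
    rw [ha_def]; linarith
  obtain ⟨ε, hε_def⟩ : ∃ ε : ℝ, ε = (lam1 - b * Real.sqrt 2) / (2 * (b * Real.sqrt 2)) :=
    ⟨_, rfl⟩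
  have hε : 0 < ε := by
    rw [hε_def]; exact div_pos (by linarith) (by positivity)
  have hεmul : b * Real.sqrt 2 * ε = (lam1 - b * Real.sqrt 2) / 2 := by
    rw [hε_def]; field_simp
  obtain ⟨δ, hδ_def⟩ : ∃ δ : ℝ, δ = (lam1 - b * Real.sqrt 2) / 2 := ⟨_, rfl⟩
  have hδ : 0 < δ := by rw [hδ_def]; linarith
  have hεinv : 0 < 1 / ε := one_div_pos.mpr hε
  obtain ⟨c₅, hc₅_def⟩ : ∃ c₅ : ℝ, c₅ = min (δ / (2 * ε + 1)) (a * b / (2 + 1 / ε)) :=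
    ⟨_, rfl⟩
  have hc₅ : 0 < c₅ := by
    rw [hc₅_def]
    exact lt_min (div_pos hδ (by linarith)) (div_pos (mul_pos ha hb) (by linarith))
  have hab2 : 0 < a * b / 2 := by positivity
  have habβ : 0 < (a * b / 2) ^ β := Real.rpow_pos_of_pos hab2 β
  refine ⟨C₀ * (2 * b) / ((a * b / 2) ^ β * c₅),
    div_pos (by positivity) (mul_pos habβ hc₅), ?_⟩
  intro t ht lam hlam y hy
  have hv1 : -d ≤ y.im := (abs_le.mp hy).1
  have hv2 : y.im ≤ d := (abs_le.mp hy).2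
  -- trig bounds on the strip
  have hcosv : Real.cos d ≤ Real.cos y.im := by
    rw [← Real.cos_abs y.im]
    exact Real.cos_le_cos_of_nonneg_of_le_pi (abs_nonneg _) (by linarith) hy
  have hsinv : |Real.sin y.im| ≤ Real.sin d := by
    have h1 : Real.sin |y.im| ≤ Real.sin d :=
      Real.sin_le_sin_of_le_of_le_pi_div_two (by linarith [abs_nonneg y.im]) (by linarith) hy
    have h2 : Real.sin |y.im| = |Real.sin y.im| := by
      rcases le_total 0 y.im with h | h
      · rw [abs_of_nonneg h, abs_of_nonneg (Real.sin_nonneg_of_nonneg_of_le_pi h (by linarith))]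
      · have hs : Real.sin y.im ≤ 0 := by
          have h5 := Real.sin_nonneg_of_nonneg_of_le_pi
            (show (0:ℝ) ≤ -y.im by linarith) (show -y.im ≤ Real.pi by linarith)
          rw [Real.sin_neg] at h5; linarith
        rw [abs_of_nonpos h, abs_of_nonpos hs, Real.sin_neg]
    rw [← h2]; exact h1
  obtain ⟨p, hp_def⟩ : ∃ p : ℝ, p = Real.cos y.im - Real.sin y.im := ⟨_, rfl⟩
  obtain ⟨q, hq_def⟩ : ∃ q : ℝ, q = Real.cos y.im + Real.sin y.im := ⟨_, rfl⟩
  have hpa : a ≤ p := by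
    have := (abs_le.mp hsinv).2; rw [hp_def, ha_def]; linarith
  have hqa : a ≤ q := by
    have := (abs_le.mp hsinv).1; rw [hq_def, ha_def]; linarith
  have hp0 : 0 < p := ha.trans_le hpa
  have hq0 : 0 < q := ha.trans_le hqa
  have hp2 : p ≤ Real.sqrt 2 := by
    have h1 : p ^ 2 ≤ 2 := by
      rw [hp_def]
      have e : (Real.cos y.im - Real.sin y.im) ^ 2
          = (Real.sin y.im ^ 2 + Real.cos y.im ^ 2) - 2 * Real.sin y.im * Real.cos y.im := by
        ring
      rw [e, Real.sin_sq_add_cos_sq, ← Real.sin_two_mul]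
      linarith [Real.neg_one_le_sin (2 * y.im)]
    exact (Real.le_sqrt hp0.le (by norm_num)).mpr h1
  have hq2 : q ≤ Real.sqrt 2 := by
    have h1 : q ^ 2 ≤ 2 := by
      rw [hq_def]
      have e : (Real.cos y.im + Real.sin y.im) ^ 2
          = (Real.sin y.im ^ 2 + Real.cos y.im ^ 2) + 2 * Real.sin y.im * Real.cos y.im := by
        ring
      rw [e, Real.sin_sq_add_cos_sq, ← Real.sin_two_mul]
      linarith [Real.sin_le_one (2 * y.im)]
    exact (Real.le_sqrt hq0.le (by norm_num)).mpr h1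
  obtain ⟨x, hx_def⟩ : ∃ x : ℝ, x = y.re := ⟨_, rfl⟩
  rw [← hx_def]
  obtain ⟨S, hS_def⟩ : ∃ S : ℝ, S = |Real.sinh x| := ⟨_, rfl⟩
  have hS0 : 0 ≤ S := hS_def ▸ abs_nonneg _
  have hch : 0 < Real.cosh x := Real.cosh_pos x
  have hchsqS : Real.cosh x ^ 2 = S ^ 2 + 1 := by
    rw [hS_def, sq_abs]; exact Real.cosh_sq x
  have hSch : S ≤ Real.cosh x :=
    le_of_pow_le_pow_left₀ two_ne_zero hch.le (by rw [hchsqS]; linarith)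
  have hchS : Real.cosh x ≤ S + 1 :=
    le_of_pow_le_pow_left₀ two_ne_zero (by linarith) (by rw [hchsqS]; linarith [hS0])
  have hexp : Real.exp |x| = Real.cosh x + S := by rw [hS_def]; exact my_exp_abs x
  have hexp_pos : (0:ℝ) < Real.exp |x| := Real.exp_pos _
  -- the contour point and its components
  have hzre : (zc b y).re = b * (Real.cosh x * p) := by
    rw [zc_re b y, ← hx_def, ← hp_def]
  have hzim : (zc b y).im = b * (Real.sinh x * q) := by
    rw [zc_im b y, ← hx_def, ← hq_def]
  have hzre_pos : 0 < (zc b y).re := by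
    rw [hzre]; exact mul_pos hb (mul_pos hch hp0)
  have hz_ne : zc b y ≠ 0 := by
    intro h; rw [h] at hzre_pos; simp at hzre_pos
  have habsz_pos : 0 < ‖zc b y‖ := norm_pos_iff.mpr hz_ne
  have hzlow : a * b / 2 * Real.exp |x| ≤ ‖zc b y‖ := by
    have h1 : Real.exp |x| ≤ 2 * Real.cosh x := by rw [hexp]; linarith
    have h2 : a * b / 2 * Real.exp |x| ≤ b * (Real.cosh x * p) := by
      calc a * b / 2 * Real.exp |x| ≤ a * b / 2 * (2 * Real.cosh x) :=
            mul_le_mul_of_nonneg_left h1 (by positivity)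
        _ = b * (Real.cosh x * a) := by ring
        _ ≤ b * (Real.cosh x * p) :=
            mul_le_mul_of_nonneg_left (mul_le_mul_of_nonneg_left hpa hch.le) hb.le
    exact h2.trans (hzre ▸ Complex.re_le_norm (zc b y))
  -- bound on the Mittag-Leffler factor
  have htγ : (0:ℝ) < t ^ γ := Real.rpow_pos_of_pos ht γ
  have hargz : |Complex.arg (zc b y)| < Real.pi / 2 :=
    Complex.abs_arg_lt_pi_div_two_iff.mpr (Or.inl hzre_pos)
  have hre_zb : 0 ≤ ((zc b y) ^ (β:ℂ)).re := by
    rw [Complex.cpow_def_of_ne_zero hz_ne, Complex.exp_re]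
    apply mul_nonneg (Real.exp_pos _).le
    have him : (Complex.log (zc b y) * (β:ℂ)).im = Complex.arg (zc b y) * β := by
      simp [Complex.mul_im, Complex.log_im]
    rw [him]
    apply Real.cos_nonneg_of_mem_Icc
    have habs : |Complex.arg (zc b y) * β| ≤ Real.pi / 2 := by
      rw [abs_mul, abs_of_nonneg hβ0.le]
      calc |Complex.arg (zc b y)| * β ≤ (Real.pi / 2) * 1 :=
            mul_le_mul hargz.le hβ1.le hβ0.le (by positivity)
        _ = Real.pi / 2 := mul_one _
    exact ⟨neg_le_of_abs_le habs, le_of_abs_le habs⟩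
  have hw_re : (-(((t ^ γ : ℝ) : ℂ) * zc b y ^ (β : ℂ))).re ≤ 0 := by
    simp only [Complex.neg_re, Complex.mul_re, Complex.ofReal_re, Complex.ofReal_im,
      zero_mul, sub_zero]
    have := mul_nonneg htγ.le hre_zb
    linarith
  have habsw : ‖(-(((t ^ γ : ℝ) : ℂ) * zc b y ^ (β : ℂ)))‖
      = t ^ γ * ‖zc b y‖ ^ β := by
    rw [norm_neg, norm_mul, Complex.norm_real, Real.norm_of_nonneg htγ.le,
      Complex.norm_cpow_of_ne_zero hz_ne]
    simp [Real.exp_zero]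
  have hzbpos : (0:ℝ) < ‖zc b y‖ ^ β := Real.rpow_pos_of_pos habsz_pos β
  have hzblow : (a * b / 2) ^ β * Real.exp (β * |x|) ≤ ‖zc b y‖ ^ β := by
    have h1 : (a * b / 2 * Real.exp |x|) ^ β ≤ ‖zc b y‖ ^ β :=
      Real.rpow_le_rpow (by positivity) hzlow hβ0.le
    rw [Real.mul_rpow hab2.le hexp_pos.le, ← Real.exp_mul, mul_comm |x| β] at h1
    exact h1
  have hA1 : ‖mlf γ 1 (-(((t ^ γ : ℝ) : ℂ) * zc b y ^ (β : ℂ)))‖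
      ≤ C₀ / (t ^ γ * ((a * b / 2) ^ β * Real.exp (β * |x|))) := by
    calc ‖mlf γ 1 (-(((t ^ γ : ℝ) : ℂ) * zc b y ^ (β : ℂ)))‖
        ≤ C₀ / (1 + ‖(-(((t ^ γ : ℝ) : ℂ) * zc b y ^ (β : ℂ)))‖) := hml _ hw_re
      _ ≤ C₀ / (t ^ γ * ((a * b / 2) ^ β * Real.exp (β * |x|))) := by
          apply div_le_div_of_nonneg_left hC₀.le
            (mul_pos htγ (mul_pos habβ (Real.exp_pos _)))
          rw [habsw]
          have h2 : t ^ γ * ((a * b / 2) ^ β * Real.exp (β * |x|))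
              ≤ t ^ γ * ‖zc b y‖ ^ β :=
            mul_le_mul_of_nonneg_left hzblow htγ.le
          linarith
  -- bound on the derivative factor
  have hA2 : ‖zcDeriv b y‖ ≤ 2 * b * Real.exp |x| := by
    calc ‖zcDeriv b y‖ ≤ |(zcDeriv b y).re| + |(zcDeriv b y).im| :=
          Complex.norm_le_abs_re_add_abs_im _
      _ ≤ 2 * b * Real.exp |x| := by
          rw [zcD_re, zcD_im, ← hx_def, ← hp_def, ← hq_def]
          have h1 : |b * (Real.sinh x * p)| = b * (S * p) := by
            rw [abs_mul, abs_mul, abs_of_nonneg hb.le, abs_of_nonneg hp0.le, ← hS_def]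
          have h2 : |b * (Real.cosh x * q)| = b * (Real.cosh x * q) := by
            rw [abs_of_nonneg (by positivity)]
          rw [h1, h2, hexp]
          have k1 : b * S * p ≤ b * S * Real.sqrt 2 :=
            mul_le_mul_of_nonneg_left hp2 (mul_nonneg hb.le hS0)
          have k2 : b * Real.cosh x * q ≤ b * Real.cosh x * Real.sqrt 2 :=
            mul_le_mul_of_nonneg_left hq2 (mul_nonneg hb.le hch.le)
          have k3 : b * S * Real.sqrt 2 ≤ b * S * 2 :=
            mul_le_mul_of_nonneg_left hsqrt2le (mul_nonneg hb.le hS0)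
          have k4 : b * Real.cosh x * Real.sqrt 2 ≤ b * Real.cosh x * 2 :=
            mul_le_mul_of_nonneg_left hsqrt2le (mul_nonneg hb.le hch.le)
          linarith [k1, k2, k3, k4]
  -- lower bound for |z - lam|
  have hlamre : (zc b y - (lam:ℂ)).re = b * (Real.cosh x * p) - lam := by
    rw [Complex.sub_re, Complex.ofReal_re, hzre]
  have hlamim : (zc b y - (lam:ℂ)).im = b * (Real.sinh x * q) := by
    rw [Complex.sub_im, Complex.ofReal_im, hzim, sub_zero]
  have hzlam : c₅ * Real.exp |x| ≤ ‖zc b y - (lam:ℂ)‖ := by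
    rcases le_or_gt S ε with hcase | hcase
    · -- |sinh x| ≤ ε : the contour stays to the left of lam
      have hch1 : Real.cosh x ≤ 1 + ε := by
        have hS2 : S ^ 2 ≤ ε ^ 2 := pow_le_pow_left₀ hS0 hcase 2
        exact le_of_pow_le_pow_left₀ two_ne_zero (by linarith)
          (by rw [hchsqS]; linarith [hS2, hε])
      have hR : b * (Real.cosh x * p) ≤ (lam1 + b * Real.sqrt 2) / 2 := by
        have h1 : b * (Real.cosh x * p) ≤ b * ((1 + ε) * Real.sqrt 2) :=
          mul_le_mul_of_nonneg_left
            (mul_le_mul hch1 hp2 hp0.le (by linarith)) hb.le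
        have h2 : b * ((1 + ε) * Real.sqrt 2) = (lam1 + b * Real.sqrt 2) / 2 := by
          have : b * ((1 + ε) * Real.sqrt 2) = b * Real.sqrt 2 + b * Real.sqrt 2 * ε := by
            ring
          rw [this, hεmul]; ring
        linarith
      have hdelta : δ ≤ lam - b * (Real.cosh x * p) := by
        rw [hδ_def]; linarith
      have habs1 : lam - b * (Real.cosh x * p) ≤ ‖zc b y - (lam:ℂ)‖ := by
        have h3 := Complex.abs_re_le_norm (zc b y - (lam:ℂ))
        rw [hlamre] at h3
        calc lam - b * (Real.cosh x * p) ≤ |b * (Real.cosh x * p) - lam| := by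
              rw [abs_sub_comm]; exact le_abs_self _
          _ ≤ ‖zc b y - (lam:ℂ)‖ := h3
      have hexp_le : Real.exp |x| ≤ 2 * ε + 1 := by rw [hexp]; linarith
      have hc₅1 : c₅ ≤ δ / (2 * ε + 1) := hc₅_def ▸ min_le_left _ _
      calc c₅ * Real.exp |x| ≤ (δ / (2 * ε + 1)) * (2 * ε + 1) :=
            mul_le_mul hc₅1 hexp_le hexp_pos.le (by positivity)
        _ = δ := by field_simp
        _ ≤ ‖zc b y - (lam:ℂ)‖ := hdelta.trans habs1
    · -- |sinh x| > ε : the imaginary part is large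
      have hIm : a * b * S ≤ |(zc b y - (lam:ℂ)).im| := by
        rw [hlamim, abs_mul, abs_mul, abs_of_nonneg hb.le, abs_of_nonneg hq0.le, ← hS_def]
        have h4 := mul_le_mul_of_nonneg_left hqa (mul_nonneg hb.le hS0)
        linarith [h4]
      have hexp_le : Real.exp |x| ≤ (2 + 1 / ε) * S := by
        have h1 : (1:ℝ) ≤ S / ε := (one_le_div hε).mpr hcase.le
        have h3 : (1:ℝ) ≤ 1 / ε * S := by
          rw [one_div]
          calc (1:ℝ) ≤ S / ε := h1
            _ = ε⁻¹ * S := by rw [div_eq_mul_inv]; ring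
        rw [hexp]
        linarith [h3]
      have hc₅2 : c₅ ≤ a * b / (2 + 1 / ε) := hc₅_def ▸ min_le_right _ _
      calc c₅ * Real.exp |x| ≤ (a * b / (2 + 1 / ε)) * ((2 + 1 / ε) * S) :=
            mul_le_mul hc₅2 hexp_le hexp_pos.le (by positivity)
        _ = a * b * S := by
            have hne : (2:ℝ) + 1 / ε ≠ 0 := by positivity
            have e : a * b / (2 + 1 / ε) * ((2 + 1 / ε) * S)
                = a * b * S * ((2 + 1 / ε) / (2 + 1 / ε)) := by ring
            rw [e, div_self hne, mul_one]
        _ ≤ |(zc b y - (lam:ℂ)).im| := hIm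
        _ ≤ ‖zc b y - (lam:ℂ)‖ := Complex.abs_im_le_norm _
  have hA3 : (‖zc b y - (lam:ℂ)‖)⁻¹ ≤ (c₅ * Real.exp |x|)⁻¹ :=
    inv_anti₀ (mul_pos hc₅ hexp_pos) hzlam
  -- assemble
  have hsplit : ‖gfun γ β b t lam y‖
      = ‖mlf γ 1 (-(((t ^ γ : ℝ) : ℂ) * zc b y ^ (β : ℂ)))‖
        * ‖zcDeriv b y‖ * (‖zc b y - (lam:ℂ)‖)⁻¹ := by
    rw [gfun, norm_mul, norm_mul, norm_inv]
  rw [hsplit]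
  have hfinal : C₀ / (t ^ γ * ((a * b / 2) ^ β * Real.exp (β * |x|)))
      * (2 * b * Real.exp |x|) * (c₅ * Real.exp |x|)⁻¹
      = C₀ * (2 * b) / ((a * b / 2) ^ β * c₅) * t ^ (-γ) * Real.exp (-β * |x|) := by
    rw [Real.rpow_neg ht.le, show -β * |x| = -(β * |x|) from by ring, Real.exp_neg]
    have e1 : Real.exp (β * |x|) ≠ 0 := (Real.exp_pos _).ne'
    have e2 : Real.exp |x| ≠ 0 := hexp_pos.ne'
    have e3 : t ^ γ ≠ 0 := htγ.ne'
    have e4 : (a * b / 2) ^ β ≠ 0 := habβ.ne'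
    field_simp
  rw [← hfinal]
  apply mul_le_mul _ hA3 (inv_nonneg.mpr (norm_nonneg _)) (by positivity)
  exact mul_le_mul hA1 hA2 (norm_nonneg _) (by positivity)
end

section
/- Let γ ∈ (0,1) and w ∈ ℂ. Then for every t > 0 the map t ↦ e_{γ,γ}(−t^γ w) is differentiable and its derivative satisfies d/dt e_{γ,γ}(−t^γ w) = w · t^{γ−1} · ( (γ−1) · e_{γ,2γ}(−t^γ w) − e_{γ,2γ−1}(−t^γ w) ). -/
/-- Master summability: `∑ (n+1) qⁿ / |Γ(nγ+μ)|` converges. -/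
lemma gam_summable (γ : ℝ) (hγ : 0 < γ) (hγ1 : γ ≤ 1) (μ : ℝ) (q : ℝ) (hq : 0 < q) :
    Summable (fun n : ℕ => ((n : ℝ) + 1) * q ^ n * |Real.Gamma ((n : ℝ) * γ + μ)|⁻¹) := by
  set a : ℕ → ℝ := fun n => ((n : ℝ) + 1) * q ^ n * |Real.Gamma ((n : ℝ) * γ + μ)|⁻¹ with ha
  apply summable_of_ratio_norm_eventually_le (r := 1/2) (by norm_num)
  -- choose N with n ≥ N → n*γ+μ ≥ T
  set T : ℝ := max 2 (max γ ((8 * q) ^ (1 / γ))) with hT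
  obtain ⟨N, hN⟩ := exists_nat_ge ((T - μ) / γ)
  rw [Filter.eventually_atTop]
  refine ⟨N, fun n hn => ?_⟩
  set x : ℝ := (n : ℝ) * γ + μ with hx
  have hxT : T ≤ x := by
    have : (T - μ) / γ ≤ (n : ℝ) := le_trans hN (by exact_mod_cast hn)
    have := (div_le_iff₀ hγ).mp this
    simp only [hx]; linarith
  have hx2 : (2 : ℝ) ≤ x := le_trans (le_max_left _ _) hxT
  have hxpos : 0 < x := by linarith
  have hxγ : γ ≤ x := le_trans (le_trans (le_max_left _ _) (le_max_right _ _)) hxT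
  have hx8q : 8 * q ≤ x ^ γ := by
    have h1 : (8 * q) ^ (1 / γ) ≤ x := le_trans (le_trans (le_max_right _ _) (le_max_right _ _)) hxT
    have h2 : ((8 * q) ^ (1 / γ)) ^ γ ≤ x ^ γ :=
      Real.rpow_le_rpow (Real.rpow_nonneg (by positivity) _) h1 hγ.le
    rwa [← Real.rpow_mul (by positivity), one_div,
      inv_mul_cancel₀ hγ.ne', Real.rpow_one] at h2
  -- log-convexity of Gamma gives `x Γ(x) ≤ (x+γ)^(1-γ) Γ(x+γ)`
  have hγ1 : γ ≤ 1 := hγ1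
  have hGx : 0 < Real.Gamma x := Real.Gamma_pos_of_pos hxpos
  have hGxγ : 0 < Real.Gamma (x + γ) := Real.Gamma_pos_of_pos (by linarith)
  have hcvx := Real.convexOn_log_Gamma.2 (show x + γ ∈ Set.Ioi (0:ℝ) by
      simp; linarith) (show x + 1 + γ ∈ Set.Ioi (0:ℝ) by simp; linarith)
      hγ.le (by linarith : (0:ℝ) ≤ 1 - γ) (by ring)
  simp only [smul_eq_mul, Function.comp_apply] at hcvx
  have harg : γ * (x + γ) + (1 - γ) * (x + 1 + γ) = x + 1 := by ring
  rw [harg] at hcvx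
  have hG1γ : Real.Gamma (x + 1 + γ) = (x + γ) * Real.Gamma (x + γ) := by
    have := Real.Gamma_add_one (s := x + γ) (by positivity)
    rw [show x + γ + 1 = x + 1 + γ by ring] at this
    exact this
  have key : x * Real.Gamma x ≤ (x + γ) ^ (1 - γ) * Real.Gamma (x + γ) := by
    have h1 : Real.Gamma (x + 1) ≤
        Real.Gamma (x + γ) ^ γ * Real.Gamma (x + 1 + γ) ^ (1 - γ) := by
      have h2 := Real.exp_le_exp.2 hcvx
      rwa [Real.exp_log (Real.Gamma_pos_of_pos (by linarith : (0:ℝ) < x + 1)),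
        Real.exp_add, mul_comm γ _, mul_comm (1 - γ) _,
        ← Real.rpow_def_of_pos hGxγ, ← Real.rpow_def_of_pos
          (Real.Gamma_pos_of_pos (by linarith : (0:ℝ) < x + 1 + γ))] at h2
    rw [Real.Gamma_add_one hxpos.ne'] at h1
    rw [hG1γ, Real.mul_rpow (by positivity) hGxγ.le, ← mul_assoc,
      mul_comm (Real.Gamma (x+γ) ^ γ) _, mul_assoc, ← Real.rpow_add hGxγ,
      show γ + (1 - γ) = 1 by ring, Real.rpow_one] at h1
    exact h1
  -- bound `(x+γ)^(1-γ) ≤ x / (4q)`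
  have hb : (x + γ) ^ (1 - γ) ≤ x / (4 * q) := by
    have e1 : (x + γ) ^ (1 - γ) = (x + γ) * (x + γ) ^ (-γ) := by
      rw [show (1 : ℝ) - γ = 1 + -γ by ring, Real.rpow_add (by linarith), Real.rpow_one]
    have e2 : (x + γ) ^ (-γ) ≤ x ^ (-γ) :=
      Real.rpow_le_rpow_of_nonpos hxpos (by linarith) (by linarith)
    have e3 : x ^ (-γ) = (x ^ γ)⁻¹ := Real.rpow_neg hxpos.le γ
    have e4 : (x ^ γ)⁻¹ ≤ (8 * q)⁻¹ := by
      apply inv_anti₀ (by positivity) hx8q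
    have e5 : x + γ ≤ 2 * x := by linarith
    calc (x + γ) ^ (1 - γ) = (x + γ) * (x + γ) ^ (-γ) := e1
      _ ≤ (2 * x) * (8 * q)⁻¹ := by
          exact mul_le_mul e5 (le_trans e2 (e3 ▸ e4)) (Real.rpow_nonneg (by linarith) _)
            (by positivity)
      _ = x / (4 * q) := by field_simp; ring
  have hstep : 4 * q * Real.Gamma x ≤ Real.Gamma (x + γ) := by
    have h5 : x * Real.Gamma x ≤ x / (4 * q) * Real.Gamma (x + γ) :=
      le_trans key (mul_le_mul_of_nonneg_right hb hGxγ.le)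
    rw [div_mul_eq_mul_div, le_div_iff₀ (by positivity)] at h5
    nlinarith
  -- conclude the ratio bound
  have hxs : ((n : ℝ) + 1) * γ + μ = x + γ := by push_cast [hx]; ring
  have han1 : a (n + 1) = ((n : ℝ) + 2) * q ^ (n + 1) * (Real.Gamma (x + γ))⁻¹ := by
    simp only [ha]
    push_cast
    rw [show ((n : ℝ) + 1) * γ + μ = x + γ from hxs, abs_of_pos hGxγ]
    ring
  have han : a n = ((n : ℝ) + 1) * q ^ n * (Real.Gamma x)⁻¹ := by
    simp only [ha, ← hx, abs_of_pos hGx]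
  have hnn : 0 ≤ a n := by rw [han]; positivity
  have hnn1 : 0 ≤ a (n + 1) := by rw [han1]; positivity
  rw [Real.norm_of_nonneg hnn1, Real.norm_of_nonneg hnn, han1, han]
  have hinv : (Real.Gamma (x + γ))⁻¹ ≤ (4 * q * Real.Gamma x)⁻¹ :=
    inv_anti₀ (by positivity) hstep
  calc ((n : ℝ) + 2) * q ^ (n + 1) * (Real.Gamma (x + γ))⁻¹
      ≤ ((n : ℝ) + 2) * q ^ (n + 1) * (4 * q * Real.Gamma x)⁻¹ := by
        apply mul_le_mul_of_nonneg_left hinv (by positivity)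
    _ ≤ 1 / 2 * (((n : ℝ) + 1) * q ^ n * (Real.Gamma x)⁻¹) := by
        rw [pow_succ]
        have h2 : (n : ℝ) + 2 ≤ 2 * ((n : ℝ) + 1) := by push_cast; linarith
        have hq' : (0:ℝ) < q ^ n := by positivity
        rw [mul_inv, mul_inv]
        calc ((n:ℝ) + 2) * (q ^ n * q) * ((4:ℝ)⁻¹ * q⁻¹ * (Real.Gamma x)⁻¹)
            = ((n:ℝ) + 2) * q ^ n * ((4:ℝ)⁻¹ * (Real.Gamma x)⁻¹) * (q * q⁻¹) := by ring
          _ = ((n:ℝ) + 2) * q ^ n * ((4:ℝ)⁻¹ * (Real.Gamma x)⁻¹) := by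
              rw [mul_inv_cancel₀ hq.ne', mul_one]
          _ ≤ 2 * ((n:ℝ) + 1) * q ^ n * ((4:ℝ)⁻¹ * (Real.Gamma x)⁻¹) := by
              apply mul_le_mul_of_nonneg_right (mul_le_mul_of_nonneg_right h2 hq'.le)
                (by positivity)
          _ = 1 / 2 * (((n : ℝ) + 1) * q ^ n * (Real.Gamma x)⁻¹) := by ring

/-- Reciprocal-Gamma recurrence: `1/Γ(x) = x / Γ(x+1)` for real `x > -1`
(including `x = 0`, where both sides vanish). -/
lemma inv_gamma_step (x : ℝ) (hx : -1 < x) :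
    (Complex.Gamma ((x : ℝ) : ℂ))⁻¹ = (x : ℂ) * (Complex.Gamma ((x + 1 : ℝ) : ℂ))⁻¹ := by
  rcases eq_or_ne x 0 with rfl | hx0
  · simp [Complex.Gamma_zero]
  · have hne : Real.Gamma x ≠ 0 := by
      apply Real.Gamma_ne_zero
      intro m
      rcases m with _ | m
      · simpa using hx0
      · intro h
        have : (0:ℝ) ≤ (m:ℝ) := by positivity
        have hm : -((m:ℝ) + 1) ≤ -1 := by linarith
        rw [h] at hx
        push_cast at hx
        linarith
    have hadd : Complex.Gamma ((x + 1 : ℝ) : ℂ) = (x : ℂ) * Complex.Gamma ((x : ℝ) : ℂ) := by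
      push_cast
      exact Complex.Gamma_add_one _ (by exact_mod_cast hx0)
    rw [hadd, mul_inv, ← mul_assoc, mul_inv_cancel₀ (by exact_mod_cast hx0 : (x:ℂ) ≠ 0), one_mul]


lemma norm_inv_gamma (x : ℝ) : ‖(Complex.Gamma ((x : ℝ) : ℂ))⁻¹‖ = |Real.Gamma x|⁻¹ := by
  rw [Complex.Gamma_ofReal, norm_inv, Complex.norm_real, Real.norm_eq_abs]

lemma mlf_summable (γ : ℝ) (hγ : 0 < γ) (hγ1 : γ ≤ 1) (μ : ℝ) (z : ℂ) :
    Summable (fun n : ℕ => (Complex.Gamma (((n : ℝ) * γ + μ : ℝ) : ℂ))⁻¹ * z ^ n) := by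
  apply Summable.of_norm_bounded (gam_summable γ hγ hγ1 μ (‖z‖ + 1) (by positivity))
  intro n
  rw [norm_mul, norm_pow, norm_inv_gamma]
  have h1 : ‖z‖ ^ n ≤ (‖z‖ + 1) ^ n := pow_le_pow_left₀ (norm_nonneg z) (by linarith) n
  have h2 : (1:ℝ) ≤ (n : ℝ) + 1 := by
    have : (0:ℝ) ≤ (n:ℝ) := Nat.cast_nonneg n
    linarith
  calc |Real.Gamma ((n:ℝ)*γ+μ)|⁻¹ * ‖z‖ ^ n
      ≤ |Real.Gamma ((n:ℝ)*γ+μ)|⁻¹ * (‖z‖+1) ^ n :=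
        mul_le_mul_of_nonneg_left h1 (by positivity)
    _ = 1 * ((‖z‖+1)^n * |Real.Gamma ((n:ℝ)*γ+μ)|⁻¹) := by ring
    _ ≤ ((n:ℝ)+1) * ((‖z‖+1)^n * |Real.Gamma ((n:ℝ)*γ+μ)|⁻¹) :=
        mul_le_mul_of_nonneg_right h2 (by positivity)
    _ = ((n:ℝ)+1) * (‖z‖+1)^n * |Real.Gamma ((n:ℝ)*γ+μ)|⁻¹ := by ring

lemma mlf_summable_lin (γ : ℝ) (hγ : 0 < γ) (hγ1 : γ ≤ 1) (μ ν : ℝ) (z : ℂ) :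
    Summable (fun n : ℕ =>
      ((((n : ℝ) * γ + ν : ℝ)) : ℂ) * ((Complex.Gamma (((n : ℝ) * γ + μ : ℝ) : ℂ))⁻¹ * z ^ n)) := by
  apply Summable.of_norm_bounded
    (((gam_summable γ hγ hγ1 μ (‖z‖ + 1) (by positivity)).mul_left (γ + |ν|)))
  intro n
  rw [norm_mul, norm_mul, norm_pow, norm_inv_gamma, Complex.norm_real]
  have h1 : ‖z‖ ^ n ≤ (‖z‖ + 1) ^ n := pow_le_pow_left₀ (norm_nonneg z) (by linarith) n
  have h3 : |(n:ℝ)*γ + ν| ≤ (γ + |ν|) * ((n:ℝ)+1) := by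
    have := abs_add_le ((n:ℝ)*γ) ν
    have h4 : |(n:ℝ)*γ| = (n:ℝ)*γ := abs_of_nonneg (by positivity)
    have h5 : (0:ℝ) ≤ (n:ℝ) := by positivity
    nlinarith [abs_nonneg ν]
  have hγI : (0:ℝ) ≤ |Real.Gamma ((n:ℝ)*γ+μ)|⁻¹ := by positivity
  calc |(n:ℝ)*γ + ν| * (|Real.Gamma ((n:ℝ)*γ+μ)|⁻¹ * ‖z‖ ^ n)
      ≤ ((γ + |ν|) * ((n:ℝ)+1)) * (|Real.Gamma ((n:ℝ)*γ+μ)|⁻¹ * (‖z‖+1) ^ n) := by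
        apply mul_le_mul h3 (mul_le_mul_of_nonneg_left h1 hγI)
          (by positivity) (by positivity)
    _ = (γ + |ν|) * (((n:ℝ)+1) * (‖z‖+1)^n * |Real.Gamma ((n:ℝ)*γ+μ)|⁻¹) := by ring


/-- `d/dt e_{γ,γ}(-t^γ w)
  = w t^{γ-1} ((γ-1) e_{γ,2γ}(-t^γ w) - e_{γ,2γ-1}(-t^γ w))` for `t > 0`. -/
theorem stmt13 (γ : ℝ) (hγ : γ ∈ Set.Ioo (0 : ℝ) 1) (w : ℂ) :
    ∀ t : ℝ, 0 < t →
      HasDerivAt (fun s : ℝ => mlf γ γ (-((s ^ γ : ℝ) : ℂ) * w))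
        (w * ((t ^ (γ - 1) : ℝ) : ℂ) *
          (((γ : ℂ) - 1) * mlf γ (2 * γ) (-((t ^ γ : ℝ) : ℂ) * w)
            - mlf γ (2 * γ - 1) (-((t ^ γ : ℝ) : ℂ) * w))) t := by
  obtain ⟨hγ0, hγ1⟩ := hγ
  intro t ht
  set C : ℝ := max 1 ((2 * t) ^ γ * ‖w‖) with hC
  have hC1 : (1:ℝ) ≤ C := le_max_left _ _
  set D : ℝ := γ * (t / 2) ^ (γ - 1) * ‖w‖ with hD
  have hD0 : 0 ≤ D := by positivity
  set u : ℕ → ℝ := fun n => D * (((n:ℝ) + 1) * C ^ n * |Real.Gamma ((n:ℝ) * γ + γ)|⁻¹) with hu'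
  have hu : Summable u := (gam_summable γ hγ0 hγ1.le γ C (by linarith)).mul_left D
  set g : ℕ → ℝ → ℂ := fun n s =>
    (Complex.Gamma (((n : ℝ) * γ + γ : ℝ) : ℂ))⁻¹ * (-((s ^ γ : ℝ) : ℂ) * w) ^ n with hgdef
  set g' : ℕ → ℝ → ℂ := fun n s =>
    (Complex.Gamma (((n : ℝ) * γ + γ : ℝ) : ℂ))⁻¹ *
      ((-((γ * s ^ (γ - 1) : ℝ) : ℂ) * w) * ((n : ℂ) * (-((s ^ γ : ℝ) : ℂ) * w) ^ (n - 1)))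
    with hg'def
  have htT : t ∈ Set.Ioo (t/2) (2*t) := ⟨by linarith, by linarith⟩
  have hderiv : ∀ n (s : ℝ), s ∈ Set.Ioo (t/2) (2*t) → HasDerivAt (g n) (g' n s) s := by
    intro n s hs
    have hs0 : (0:ℝ) < s := lt_trans (by linarith) hs.1
    have h1 : HasDerivAt (fun y : ℝ => -((y ^ γ : ℝ) : ℂ) * w)
        (-((γ * s ^ (γ - 1) : ℝ) : ℂ) * w) s := by
      have h0 := (Real.hasDerivAt_rpow_const (x := s) (p := γ) (Or.inl hs0.ne')).ofReal_comp
      exact h0.neg.mul_const w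
    have h2 := HasDerivAt.scomp (𝕜 := ℝ) (𝕜' := ℂ) s (hasDerivAt_pow n (-((s ^ γ : ℝ) : ℂ) * w)) h1
    simpa [Function.comp, hgdef, hg'def, smul_eq_mul, mul_assoc] using
      h2.const_mul (Complex.Gamma (((n : ℝ) * γ + γ : ℝ) : ℂ))⁻¹
  have hbound : ∀ n (s : ℝ), s ∈ Set.Ioo (t/2) (2*t) → ‖g' n s‖ ≤ u n := by
    intro n s hs
    have hs0 : (0:ℝ) < s := lt_trans (by linarith) hs.1
    have hA : ‖-((γ * s ^ (γ - 1) : ℝ) : ℂ) * w‖ ≤ D := by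
      rw [norm_mul, norm_neg, Complex.norm_real, Real.norm_eq_abs,
        abs_of_nonneg (by positivity)]
      have hss : s ^ (γ - 1) ≤ (t/2) ^ (γ - 1) :=
        Real.rpow_le_rpow_of_nonpos (by linarith) hs.1.le (by linarith)
      exact mul_le_mul_of_nonneg_right
        (mul_le_mul_of_nonneg_left hss hγ0.le) (norm_nonneg w)
    have hBC : ‖-((s ^ γ : ℝ) : ℂ) * w‖ ≤ C := by
      rw [norm_mul, norm_neg, Complex.norm_real, Real.norm_eq_abs,
        abs_of_nonneg (by positivity)]
      refine le_trans ?_ (le_max_right _ _)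
      exact mul_le_mul_of_nonneg_right
        (Real.rpow_le_rpow hs0.le (by linarith [hs.2]) hγ0.le) (norm_nonneg w)
    have hBn : ‖-((s ^ γ : ℝ) : ℂ) * w‖ ^ (n - 1) ≤ C ^ n :=
      le_trans (pow_le_pow_left₀ (norm_nonneg _) hBC _)
        (pow_le_pow_right₀ hC1 (Nat.sub_le n 1))
    have hNorm : ‖g' n s‖ = |Real.Gamma ((n:ℝ) * γ + γ)|⁻¹ *
        (‖-((γ * s ^ (γ - 1) : ℝ) : ℂ) * w‖ *
          ((n:ℝ) * ‖-((s ^ γ : ℝ) : ℂ) * w‖ ^ (n - 1))) := by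
      simp only [hg'def, norm_mul, norm_pow, norm_inv_gamma, Complex.norm_natCast]
    rw [hNorm, hu']
    have hn0 : (0:ℝ) ≤ (n:ℝ) := Nat.cast_nonneg n
    have step1 : ‖-((γ * s ^ (γ - 1) : ℝ) : ℂ) * w‖ *
        ((n:ℝ) * ‖-((s ^ γ : ℝ) : ℂ) * w‖ ^ (n - 1)) ≤ D * ((n:ℝ) * C ^ n) := by
      apply mul_le_mul hA (mul_le_mul_of_nonneg_left hBn hn0) (by positivity) hD0
    calc |Real.Gamma ((n:ℝ) * γ + γ)|⁻¹ *
        (‖-((γ * s ^ (γ - 1) : ℝ) : ℂ) * w‖ *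
          ((n:ℝ) * ‖-((s ^ γ : ℝ) : ℂ) * w‖ ^ (n - 1)))
        ≤ |Real.Gamma ((n:ℝ) * γ + γ)|⁻¹ * (D * ((n:ℝ) * C ^ n)) :=
          mul_le_mul_of_nonneg_left step1 (by positivity)
      _ = D * ((n:ℝ) * C ^ n * |Real.Gamma ((n:ℝ) * γ + γ)|⁻¹) := by ring
      _ ≤ D * (((n:ℝ) + 1) * C ^ n * |Real.Gamma ((n:ℝ) * γ + γ)|⁻¹) := by
          apply mul_le_mul_of_nonneg_left _ hD0
          apply mul_le_mul_of_nonneg_right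
            (mul_le_mul_of_nonneg_right (by linarith) (by positivity)) (by positivity)
  have hgsum : Summable (fun n => g n t) :=
    mlf_summable γ hγ0 hγ1.le γ (-((t ^ γ : ℝ) : ℂ) * w)
  have H := hasDerivAt_tsum_of_isPreconnected hu isOpen_Ioo (isPreconnected_Ioo)
    hderiv hbound htT hgsum htT
  have hfun : (fun s : ℝ => mlf γ γ (-((s ^ γ : ℝ) : ℂ) * w)) = fun y => ∑' n, g n y := rfl
  rw [hfun]
  -- it remains to identify the derivative value
  set z : ℂ := -((t ^ γ : ℝ) : ℂ) * w with hz
  set A : ℕ → ℂ := fun n => (Complex.Gamma (((n : ℝ) * γ + 2 * γ : ℝ) : ℂ))⁻¹ with hA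
  have hs' : Summable (fun n => g' n t) :=
    Summable.of_norm_bounded hu (fun n => hbound n t htT)
  have SA : Summable (fun n => A n * z ^ n) := mlf_summable γ hγ0 hγ1.le (2 * γ) z
  have SB : Summable (fun n : ℕ =>
      ((((n : ℝ) * γ + (2 * γ - 1) : ℝ)) : ℂ) * (A n * z ^ n)) :=
    mlf_summable_lin γ hγ0 hγ1.le (2 * γ) (2 * γ - 1) z
  have E : (∑' n, g' n t) = w * ((t ^ (γ - 1) : ℝ) : ℂ) *
      (((γ : ℂ) - 1) * mlf γ (2 * γ) z - mlf γ (2 * γ - 1) z) := by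
    have hmlf1 : mlf γ (2 * γ - 1) z = ∑' n : ℕ,
        ((((n : ℝ) * γ + (2 * γ - 1) : ℝ)) : ℂ) * (A n * z ^ n) := by
      rw [mlf]
      refine tsum_congr fun n => ?_
      have hx : (-1 : ℝ) < (n : ℝ) * γ + (2 * γ - 1) := by
        have : (0:ℝ) ≤ (n:ℝ) := Nat.cast_nonneg n
        nlinarith
      rw [inv_gamma_step _ hx,
        show (n : ℝ) * γ + (2 * γ - 1) + 1 = (n : ℝ) * γ + 2 * γ by ring, mul_assoc]
    have hmlf2 : mlf γ (2 * γ) z = ∑' n : ℕ, A n * z ^ n := rfl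
    rw [hmlf1, hmlf2, ← tsum_mul_left, ← Summable.tsum_sub (SA.mul_left _) SB, ← tsum_mul_left,
      Summable.tsum_eq_zero_add hs']
    have h0 : g' 0 t = 0 := by simp [hg'def]
    rw [h0, zero_add]
    refine tsum_congr fun n => ?_
    simp only [hg'def]
    rw [show ((n + 1 : ℕ) : ℝ) * γ + γ = (n : ℝ) * γ + 2 * γ by push_cast; ring,
      Nat.add_sub_cancel]
    set G := (Complex.Gamma (((n : ℝ) * γ + 2 * γ : ℝ) : ℂ))⁻¹ with hG
    push_cast
    ring
  rw [← E] at *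
  exact H
end

section
/- Let H be a complex Hilbert space with a (finite or countable) Hilbert basis (ψ_j)_{j∈J}, and let (λ_j)_{j∈J} be real numbers with λ_j ≥ λ₁ > 0 for all j. Let γ ∈ (0,1), β ∈ (0,1), μ ∈ ℝ, and let δ ≥ 0 and ρ be real numbers with 0 < ρ − δ < β. Assume there is a constant C₀ > 0 such that |e_{γ,μ}(w)| ≤ C₀/(1+|w|) for every w ∈ ℂ with Re w ≤ 0. Then there is a constant C > 0, depending only on C₀, such that for every t > 0 and every v ∈ H with ∑_j λ_j^{2δ} |⟨v,ψ_j⟩|² < ∞, ( ∑_j λ_j^{2ρ} |e_{γ,μ}(−t^γ λ_j^β)|² |⟨v,ψ_j⟩|² )^{1/2} ≤ C · t^{−γ(ρ−δ)/β} · ( ∑_j λ_j^{2δ} |⟨v,ψ_j⟩|² )^{1/2}. -/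
open scoped ComplexInnerProductSpace

lemma rpow_le_one_add {x θ : ℝ} (hx : 0 < x) (hθ0 : 0 ≤ θ) (hθ1 : θ ≤ 1) :
    x ^ θ ≤ 1 + x := by
  rcases le_total x 1 with hx1 | hx1
  · have : x ^ θ ≤ 1 := Real.rpow_le_one hx.le hx1 hθ0
    linarith
  · have : x ^ θ ≤ x ^ (1 : ℝ) := Real.rpow_le_rpow_of_exponent_le hx1 hθ1
    rw [Real.rpow_one] at this
    linarith

lemma rpow_two_mul {a c : ℝ} (ha : 0 ≤ a) : a ^ (2 * c) = (a ^ c) ^ 2 := by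
  rw [mul_comm, Real.rpow_mul ha, Real.rpow_two]

/-- smoothing estimate
`‖e_{γ,μ}(-t^γ L^β) v‖_{Ḣ^{2ρ}} ≤ C t^{-γ(ρ-δ)/β} ‖v‖_{Ḣ^{2δ}}` in spectral form. -/
theorem stmt15 {H : Type*} [NormedAddCommGroup H] [InnerProductSpace ℂ H]
    [CompleteSpace H] {J : Type*} [Countable J] (ψ : HilbertBasis J ℂ H)
    (lam : J → ℝ) (lam1 : ℝ) (hlam1 : 0 < lam1) (hlam : ∀ j, lam1 ≤ lam j)
    (γ β μ δ ρ C₀ : ℝ) (hγ : γ ∈ Set.Ioo (0 : ℝ) 1) (hβ : β ∈ Set.Ioo (0 : ℝ) 1)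
    (hδ : 0 ≤ δ) (hρδ : 0 < ρ - δ) (hρβ : ρ - δ < β) (hC₀ : 0 < C₀)
    (hml : ∀ w : ℂ, w.re ≤ 0 → ‖mlf γ μ w‖ ≤ C₀ / (1 + ‖w‖)) :
    ∃ C : ℝ, 0 < C ∧ ∀ t : ℝ, 0 < t → ∀ v : H,
      Summable (fun j : J => lam j ^ (2 * δ) * ‖⟪ψ j, v⟫‖ ^ 2) →
      Real.sqrt (∑' j : J, lam j ^ (2 * ρ) *
          ‖mlf γ μ (-((t ^ γ * lam j ^ β : ℝ) : ℂ))‖ ^ 2 * ‖⟪ψ j, v⟫‖ ^ 2)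
        ≤ C * t ^ (-(γ * (ρ - δ) / β)) *
            Real.sqrt (∑' j : J, lam j ^ (2 * δ) * ‖⟪ψ j, v⟫‖ ^ 2) := by
  obtain ⟨hγ0, hγ1⟩ := hγ
  obtain ⟨hβ0, hβ1⟩ := hβ
  refine ⟨C₀, hC₀, fun t ht v hsum => ?_⟩
  set e : ℝ := -(γ * (ρ - δ) / β) with he
  set K : ℝ := C₀ * t ^ e with hK
  have hK0 : 0 ≤ K := mul_nonneg hC₀.le (Real.rpow_nonneg ht.le _)
  -- pointwise key inequality
  have key : ∀ j : J, lam j ^ ρ * ‖mlf γ μ (-((t ^ γ * lam j ^ β : ℝ) : ℂ))‖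
      ≤ K * lam j ^ δ := by
    intro j
    have ha : 0 < lam j := lt_of_lt_of_le hlam1 (hlam j)
    set x : ℝ := t ^ γ * lam j ^ β with hx
    have hx0 : 0 < x := mul_pos (Real.rpow_pos_of_pos ht γ) (Real.rpow_pos_of_pos ha β)
    have habs : ‖-((x : ℝ) : ℂ)‖ = x := by
      rw [norm_neg, Complex.norm_real, Real.norm_eq_abs, abs_of_pos hx0]
    have hre : (-((x : ℝ) : ℂ)).re ≤ 0 := by
      simp [Complex.neg_re, Complex.ofReal_re, hx0.le]
    have h1 : ‖mlf γ μ (-((x : ℝ) : ℂ))‖ ≤ C₀ / (1 + x) := by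
      have := hml _ hre
      rwa [habs] at this
    set θ : ℝ := (ρ - δ) / β with hθ
    have hθ0 : 0 < θ := div_pos hρδ hβ0
    have hθ1 : θ ≤ 1 := by
      rw [div_le_one hβ0]; linarith
    have h2 : x ^ θ ≤ 1 + x := rpow_le_one_add hx0 hθ0.le hθ1
    have hβθ : β * θ = ρ - δ := by
      rw [hθ]; field_simp
    have hxθ : x ^ θ = t ^ (γ * θ) * lam j ^ (ρ - δ) := by
      rw [hx, Real.mul_rpow (Real.rpow_nonneg ht.le _) (Real.rpow_nonneg ha.le _),
        ← Real.rpow_mul ht.le, ← Real.rpow_mul ha.le, hβθ]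
    have hee : e = -(γ * θ) := by rw [he, hθ]; ring
    have hard : lam j ^ (ρ - δ) = t ^ e * x ^ θ := by
      rw [hxθ, hee, ← mul_assoc, ← Real.rpow_add ht]
      simp
    have haρ : lam j ^ ρ = lam j ^ δ * lam j ^ (ρ - δ) := by
      rw [← Real.rpow_add ha]; ring_nf
    calc lam j ^ ρ * ‖mlf γ μ (-((x : ℝ) : ℂ))‖
        = lam j ^ δ * (t ^ e * x ^ θ) * ‖mlf γ μ (-((x : ℝ) : ℂ))‖ := by
          rw [haρ, hard]
      _ ≤ lam j ^ δ * (t ^ e * (1 + x)) * (C₀ / (1 + x)) := by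
          have hd : (0:ℝ) ≤ lam j ^ δ := Real.rpow_nonneg ha.le _
          gcongr <;> positivity
      _ = K * lam j ^ δ := by
          rw [hK]
          field_simp
  have hnonneg : ∀ j : J, 0 ≤ lam j := fun j => (lt_of_lt_of_le hlam1 (hlam j)).le
  have sq : ∀ j : J, lam j ^ (2 * ρ) *
      ‖mlf γ μ (-((t ^ γ * lam j ^ β : ℝ) : ℂ))‖ ^ 2 * ‖⟪ψ j, v⟫‖ ^ 2
      ≤ K ^ 2 * (lam j ^ (2 * δ) * ‖⟪ψ j, v⟫‖ ^ 2) := by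
    intro j
    rw [rpow_two_mul (hnonneg j), rpow_two_mul (hnonneg j), ← mul_pow]
    have h := key j
    have h2 : (lam j ^ ρ * ‖mlf γ μ (-((t ^ γ * lam j ^ β : ℝ) : ℂ))‖) ^ 2
        ≤ (K * lam j ^ δ) ^ 2 := by
      exact pow_le_pow_left₀ (mul_nonneg (Real.rpow_nonneg (hnonneg j) _) (norm_nonneg _)) h 2
    calc (lam j ^ ρ * ‖mlf γ μ (-((t ^ γ * lam j ^ β : ℝ) : ℂ))‖) ^ 2 * ‖⟪ψ j, v⟫‖ ^ 2
        ≤ (K * lam j ^ δ) ^ 2 * ‖⟪ψ j, v⟫‖ ^ 2 := by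
          exact mul_le_mul_of_nonneg_right h2 (sq_nonneg _)
      _ = K ^ 2 * ((lam j ^ δ) ^ 2 * ‖⟪ψ j, v⟫‖ ^ 2) := by ring
  have hsum2 : Summable (fun j : J => lam j ^ (2 * ρ) *
      ‖mlf γ μ (-((t ^ γ * lam j ^ β : ℝ) : ℂ))‖ ^ 2 * ‖⟪ψ j, v⟫‖ ^ 2) := by
    apply Summable.of_nonneg_of_le (fun j => by
      have := hnonneg j; positivity) sq (hsum.mul_left (K ^ 2))
  have hts : (∑' j : J, lam j ^ (2 * ρ) *
      ‖mlf γ μ (-((t ^ γ * lam j ^ β : ℝ) : ℂ))‖ ^ 2 * ‖⟪ψ j, v⟫‖ ^ 2)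
      ≤ K ^ 2 * ∑' j : J, lam j ^ (2 * δ) * ‖⟪ψ j, v⟫‖ ^ 2 := by
    calc _ ≤ ∑' j : J, K ^ 2 * (lam j ^ (2 * δ) * ‖⟪ψ j, v⟫‖ ^ 2) :=
          Summable.tsum_le_tsum sq hsum2 (hsum.mul_left _)
      _ = _ := tsum_mul_left
  calc Real.sqrt (∑' j : J, lam j ^ (2 * ρ) *
        ‖mlf γ μ (-((t ^ γ * lam j ^ β : ℝ) : ℂ))‖ ^ 2 * ‖⟪ψ j, v⟫‖ ^ 2)
      ≤ Real.sqrt (K ^ 2 * ∑' j : J, lam j ^ (2 * δ) * ‖⟪ψ j, v⟫‖ ^ 2) :=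
        Real.sqrt_le_sqrt hts
    _ = K * Real.sqrt (∑' j : J, lam j ^ (2 * δ) * ‖⟪ψ j, v⟫‖ ^ 2) := by
        rw [Real.sqrt_mul (sq_nonneg K), Real.sqrt_sq hK0]
    _ = C₀ * t ^ e * Real.sqrt (∑' j : J, lam j ^ (2 * δ) * ‖⟪ψ j, v⟫‖ ^ 2) := by rw [hK]
end

section
/- Let X be a real or complex Banach space, let a < b be real numbers, set τ := b − a and m := (a+b)/2, and let g : ℝ → X be twice continuously differentiable on [a,b]. Then ‖ (1/τ) ∫_a^b g(η) dη − g(m) ‖ ≤ τ^{3/2} · ( ∫_a^b ‖g''(r)‖² dr )^{1/2}. -/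
open MeasureTheory intervalIntegral Set

/-- pseudo-midpoint quadrature estimate: for `g : ℝ → X` twice
continuously differentiable on `[a,b]`, with `τ = b - a` and `m = (a+b)/2`,
`‖(1/τ) ∫_a^b g(η) dη − g(m)‖ ≤ τ^{3/2} (∫_a^b ‖g''(r)‖² dr)^{1/2}`. -/
theorem stmt17 {X : Type*} [NormedAddCommGroup X] [NormedSpace ℝ X] [CompleteSpace X]
    (a b : ℝ) (hab : a < b) (g : ℝ → X) (hg : ContDiffOn ℝ 2 g (Set.Icc a b)) :
    ‖(b - a)⁻¹ • (∫ η in a..b, g η) - g ((a + b) / 2)‖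
      ≤ (b - a) ^ ((3 : ℝ) / 2) *
          Real.sqrt (∫ r in a..b, ‖iteratedDerivWithin 2 g (Set.Icc a b) r‖ ^ 2) := by
  have hτ : (0:ℝ) < b - a := sub_pos.2 hab
  set I : Set ℝ := Set.Icc a b with hIdef
  have hIu : UniqueDiffOn ℝ I := uniqueDiffOn_Icc hab
  set m : ℝ := (a + b) / 2 with hm
  have hma : a ≤ m := by simp only [hm]; linarith
  have hmb : m ≤ b := by simp only [hm]; linarith
  have hmI : m ∈ I := ⟨hma, hmb⟩
  set f1 : ℝ → X := derivWithin g I with hf1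
  set f2 : ℝ → X := derivWithin f1 I with hf2
  have hg1 : ContDiffOn ℝ 1 f1 I := hg.derivWithin hIu (by norm_num)
  have hc1 : ContinuousOn f1 I := hg1.continuousOn
  have hc2 : ContinuousOn f2 I := (hg1.derivWithin (m := 0) hIu (by norm_num)).continuousOn
  have hcg : ContinuousOn g I := hg.continuousOn
  -- pointwise derivatives on the interior
  have hd1 : ∀ x ∈ Set.Ioo a b, HasDerivAt g (f1 x) x := by
    intro x hx
    have : DifferentiableWithinAt ℝ g I x :=
      (hg.differentiableOn (by norm_num)) x (Ioo_subset_Icc_self hx)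
    exact this.hasDerivWithinAt.hasDerivAt (Icc_mem_nhds hx.1 hx.2)
  have hd2 : ∀ x ∈ Set.Ioo a b, HasDerivAt f1 (f2 x) x := by
    intro x hx
    have : DifferentiableWithinAt ℝ f1 I x :=
      (hg1.differentiableOn (by norm_num)) x (Ioo_subset_Icc_self hx)
    exact this.hasDerivWithinAt.hasDerivAt (Icc_mem_nhds hx.1 hx.2)
  -- key identity
  have key : ∀ η ∈ I, (∫ s in m..η, (η - s) • f2 s) = g η - g m - (η - m) • f1 m := by
    intro η hη
    have hsub : Set.uIcc m η ⊆ I := Set.uIcc_subset_Icc hmI hη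
    have hcont : ContinuousOn (fun s => (η - s) • f1 s + g s) (Set.uIcc m η) :=
      (((continuousOn_const.sub continuousOn_id).smul (hc1.mono hsub)).add (hcg.mono hsub))
    have hder : ∀ x ∈ Set.Ioo (min m η) (max m η),
        HasDerivWithinAt (fun s => (η - s) • f1 s + g s) ((η - x) • f2 x) (Set.Ioi x) x := by
      intro x hx
      have hxI : x ∈ Set.Ioo a b := by
        constructor
        · exact lt_of_le_of_lt (le_min hma hη.1) hx.1
        · exact lt_of_lt_of_le hx.2 (max_le hmb hη.2)
      have h1 : HasDerivAt (fun s : ℝ => η - s) (-1) x := by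
        simpa using (hasDerivAt_id x).const_sub η
      have h2 := (h1.smul (hd2 x hxI)).add (hd1 x hxI)
      have h3 : HasDerivAt (fun s => (η - s) • f1 s + g s) ((η - x) • f2 x) x := by
        convert h2 using 1
        · rfl
        module
      exact h3.hasDerivWithinAt
    have hint : IntervalIntegrable (fun s => (η - s) • f2 s) volume m η :=
      (((continuousOn_const.sub continuousOn_id).smul (hc2.mono hsub))).intervalIntegrable
    have := intervalIntegral.integral_eq_sub_of_hasDeriv_right hcont hder hint
    rw [this]
    simp
    abel
  -- basic integrability
  have hIcc : Set.uIcc a b = I := Set.uIcc_of_le hab.le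
  have hgint : IntervalIntegrable g volume a b := (hIcc ▸ hcg).intervalIntegrable
  have hint1 : IntervalIntegrable (fun η => (η - m) • f1 m) volume a b :=
    (Continuous.smul (continuous_id.sub continuous_const) continuous_const).intervalIntegrable a b
  have hzero : (∫ η in a..b, (η - m)) = 0 := by
    rw [intervalIntegral.integral_sub intervalIntegrable_id intervalIntegrable_const,
        integral_id, intervalIntegral.integral_const]
    simp only [smul_eq_mul, hm]; ring
  have hsum : (∫ η in a..b, (g η - g m - (η - m) • f1 m))
      = (∫ η in a..b, g η) - (b - a) • g m := by
    rw [intervalIntegral.integral_sub (hgint.sub intervalIntegrable_const) hint1,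
        intervalIntegral.integral_sub hgint intervalIntegrable_const,
        intervalIntegral.integral_smul_const, hzero, intervalIntegral.integral_const, zero_smul, sub_zero]
  have hLHS : (b - a)⁻¹ • (∫ η in a..b, g η) - g m
      = (b - a)⁻¹ • ∫ η in a..b, (g η - g m - (η - m) • f1 m) := by
    rw [hsum, smul_sub, smul_smul, inv_mul_cancel₀ hτ.ne', one_smul]
  set J : ℝ := ∫ s in a..b, ‖f2 s‖ with hJ
  have hJ0 : 0 ≤ J := intervalIntegral.integral_nonneg hab.le (fun _ _ => norm_nonneg _)
  -- pointwise bound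
  have hbound : ∀ η ∈ Set.uIoc a b,
      ‖g η - g m - (η - m) • f1 m‖ ≤ (b - a) * J := by
    intro η hη
    have hηI : η ∈ I := by
      rw [Set.uIoc_of_le hab.le] at hη; exact Set.Ioc_subset_Icc_self hη
    rw [← key η hηI]
    refine le_trans intervalIntegral.norm_integral_le_abs_integral_norm ?_
    have hss : Set.uIoc m η ⊆ Set.uIoc a b := by
      rw [Set.uIoc_of_le hab.le, Set.uIoc]
      exact Set.Ioc_subset_Ioc (le_min hma hηI.1) (max_le hmb hηI.2)
    have hcontn : ContinuousOn (fun s => ‖(η - s) • f2 s‖) I :=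
      ((continuousOn_const.sub continuousOn_id).smul hc2).norm
    have hintn : IntervalIntegrable (fun s => ‖(η - s) • f2 s‖) volume a b :=
      (hIcc ▸ hcontn).intervalIntegrable
    refine le_trans (intervalIntegral.abs_integral_mono_interval hss
      (Filter.Eventually.of_forall fun x => norm_nonneg _) hintn) ?_
    rw [abs_of_nonneg (intervalIntegral.integral_nonneg hab.le (fun _ _ => norm_nonneg _))]
    have hintn2 : IntervalIntegrable (fun s => (b - a) * ‖f2 s‖) volume a b :=
      (continuousOn_const.mul (hIcc ▸ hc2.norm)).intervalIntegrable
    calc (∫ s in a..b, ‖(η - s) • f2 s‖) ≤ ∫ s in a..b, (b - a) * ‖f2 s‖ := by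
          apply intervalIntegral.integral_mono_on hab.le hintn hintn2
          intro s hs
          rw [norm_smul, Real.norm_eq_abs]
          have : |η - s| ≤ b - a :=
            abs_le.2 ⟨by linarith [hηI.1, hηI.2, hs.1, hs.2],
                      by linarith [hηI.1, hηI.2, hs.1, hs.2]⟩
          exact mul_le_mul_of_nonneg_right this (norm_nonneg _)
      _ = (b - a) * J := by rw [hJ, intervalIntegral.integral_const_mul]
  -- Cauchy-Schwarz
  have hCS : J ≤ Real.sqrt (b - a) * Real.sqrt (∫ s in a..b, ‖f2 s‖ ^ 2) := by
    have hm2 : MeasurableSet (Set.Ioc a b) := measurableSet_Ioc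
    set μ := volume.restrict (Set.Ioc a b) with hμ
    haveI : Fact (volume (Set.Ioc a b) < ⊤) :=
      ⟨by rw [Real.volume_Ioc]; exact ENNReal.ofReal_lt_top⟩
    have hmeas : AEStronglyMeasurable (fun s => ‖f2 s‖) μ :=
      ((hc2.mono Set.Ioc_subset_Icc_self).norm).aestronglyMeasurable hm2
    obtain ⟨C, hC⟩ := isCompact_Icc.exists_bound_of_continuousOn hc2
    have hmem : MemLp (fun s => ‖f2 s‖) (ENNReal.ofReal 2) μ := by
      refine MemLp.of_bound hmeas C ?_
      filter_upwards [ae_restrict_mem hm2] with x hx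
      rw [Real.norm_eq_abs, abs_of_nonneg (norm_nonneg _)]
      exact hC x (Set.Ioc_subset_Icc_self hx)
    have hone : MemLp (fun _ : ℝ => (1:ℝ)) (ENNReal.ofReal 2) μ := memLp_const 1
    have hpq : (2:ℝ).HolderConjugate 2 :=
      (Real.holderConjugate_iff_eq_conjExponent one_lt_two).2 (by norm_num)
    have hH := MeasureTheory.integral_mul_le_Lp_mul_Lq_of_nonneg hpq
      (Filter.Eventually.of_forall fun x => norm_nonneg (f2 x))
      (Filter.Eventually.of_forall fun _ => zero_le_one) hmem hone
    simp only [mul_one, Real.one_rpow] at hH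
    have hμuniv : (∫ _ : ℝ, (1:ℝ) ∂μ) = b - a := by
      rw [MeasureTheory.integral_const, smul_eq_mul, mul_one, hμ, measureReal_def, Measure.restrict_apply_univ,
        Real.volume_Ioc, ENNReal.toReal_ofReal hτ.le]
    rw [hμuniv] at hH
    rw [show (2:ℝ) = ((2:ℕ):ℝ) by norm_num] at hH
    simp only [Real.rpow_natCast] at hH
    rw [hJ, intervalIntegral.integral_of_le hab.le,
        intervalIntegral.integral_of_le hab.le, Real.sqrt_eq_rpow, Real.sqrt_eq_rpow,
        mul_comm]
    convert hH using 3
    all_goals norm_num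
  -- identify the second derivative
  have hiter : ∀ r ∈ I, iteratedDerivWithin 2 g I r = f2 r := by
    intro r hr
    rw [show (2 : ℕ) = 1 + 1 from rfl, iteratedDerivWithin_succ]
    apply derivWithin_congr
    · intro y hy; exact congrFun iteratedDerivWithin_one y
    · exact congrFun iteratedDerivWithin_one r
  have hRHSint : (∫ r in a..b, ‖iteratedDerivWithin 2 g I r‖ ^ 2)
      = ∫ r in a..b, ‖f2 r‖ ^ 2 := by
    apply intervalIntegral.integral_congr
    intro r hr
    simp only [hiter r (hIcc ▸ hr)]
  rw [hRHSint]
  have hpow : (b - a) * Real.sqrt (b - a) = (b - a) ^ ((3 : ℝ) / 2) := by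
    rw [Real.sqrt_eq_rpow]
    nth_rewrite 1 [← Real.rpow_one (b - a)]
    rw [← Real.rpow_add hτ]
    norm_num
  have hstep : ‖(b - a)⁻¹ • (∫ η in a..b, g η) - g m‖ ≤ (b - a) * J := by
    rw [hLHS, norm_smul, Real.norm_eq_abs, abs_of_pos (inv_pos.2 hτ)]
    have h2 := intervalIntegral.norm_integral_le_of_norm_le_const hbound
    calc (b - a)⁻¹ * ‖∫ η in a..b, (g η - g m - (η - m) • f1 m)‖
        ≤ (b - a)⁻¹ * ((b - a) * J * |b - a|) :=
          mul_le_mul_of_nonneg_left h2 (inv_nonneg.2 hτ.le)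
      _ = (b - a) * J := by rw [abs_of_pos hτ]; field_simp
  calc ‖(b - a)⁻¹ • (∫ η in a..b, g η) - g m‖ ≤ (b - a) * J := hstep
    _ ≤ (b - a) * (Real.sqrt (b - a) * Real.sqrt (∫ s in a..b, ‖f2 s‖ ^ 2)) :=
        mul_le_mul_of_nonneg_left hCS hτ.le
    _ = (b - a) ^ ((3 : ℝ) / 2) * Real.sqrt (∫ s in a..b, ‖f2 s‖ ^ 2) := by
        rw [← mul_assoc, hpow]
end

section
/- Let γ ∈ (0,1) and assume there is a constant C₀ > 0 such that |e_{γ,γ}(ζ)| ≤ C₀/(1+|ζ|) for every ζ ∈ ℂ with Re ζ ≤ 0. Then there is a constant C > 0, depending only on γ and C₀, such that for every w ∈ ℂ with Re w ≥ 0 and every t > 0, τ > 0, | e_{γ,1}(−t^γ w) − e_{γ,1}(−(t+τ)^γ w) | ≤ C · t^{−1} · τ. -/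
open Real Filter Set


lemma aux_gamma_fac (n : ℕ) : ∀ x : ℝ, 1 ≤ x →
    (n.factorial : ℝ) * Real.Gamma x ≤ Real.Gamma (x + n) := by
  induction n with
  | zero => intro x hx; simp
  | succ n ih =>
    intro x hx
    have hxn : (0:ℝ) < x + n := by positivity
    have h1 : Real.Gamma (x + (n+1 : ℕ)) = (x + n) * Real.Gamma (x + n) := by
      rw [show x + ((n+1 : ℕ) : ℝ) = (x + n) + 1 by push_cast; ring,
        Real.Gamma_add_one hxn.ne']
    have h2 := ih x hx
    have h3 : (0:ℝ) < Real.Gamma (x + n) :=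
      Real.Gamma_pos_of_pos (by positivity)
    have h4 : ((n:ℝ) + 1) ≤ x + n := by linarith
    calc ((n+1).factorial : ℝ) * Real.Gamma x
        = ((n:ℝ)+1) * ((n.factorial : ℝ) * Real.Gamma x) := by
          rw [Nat.factorial_succ]; push_cast; ring
      _ ≤ ((n:ℝ)+1) * Real.Gamma (x + n) := by
          apply mul_le_mul_of_nonneg_left h2 (by positivity)
      _ ≤ (x + n) * Real.Gamma (x + n) := by
          apply mul_le_mul_of_nonneg_right h4 h3.le
      _ = Real.Gamma (x + (n+1 : ℕ)) := h1.symm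

lemma aux_gamma_min : ∃ c : ℝ, 0 < c ∧ ∀ x : ℝ, 1 ≤ x → x ≤ 2 → c ≤ Real.Gamma x := by
  have hcont : ContinuousOn Real.Gamma (Icc (1:ℝ) 2) := by
    intro x hx
    have hpos : (0:ℝ) < x := lt_of_lt_of_le one_pos hx.1
    have hne : ∀ m : ℕ, x ≠ -m := by
      intro m h
      have : (0:ℝ) ≤ (m:ℝ) := Nat.cast_nonneg m
      rw [h] at hpos; linarith
    exact (Real.differentiableAt_Gamma hne).continuousAt.continuousWithinAt
  obtain ⟨x₀, hx₀, hmin⟩ := isCompact_Icc.exists_isMinOn (by norm_num : (Icc (1:ℝ) 2).Nonempty) hcont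
  refine ⟨Real.Gamma x₀, Real.Gamma_pos_of_pos (lt_of_lt_of_le one_pos hx₀.1), ?_⟩
  intro x h1 h2
  exact hmin ⟨h1, h2⟩

lemma aux_gamma_lb : ∃ c : ℝ, 0 < c ∧ ∀ p : ℝ, 1 ≤ p →
    c * ((Nat.floor (p - 1)).factorial : ℝ) ≤ Real.Gamma p := by
  obtain ⟨c, hc, hmin⟩ := aux_gamma_min
  refine ⟨c, hc, ?_⟩
  intro p hp
  set n := Nat.floor (p - 1) with hn
  have h0 : (0:ℝ) ≤ p - 1 := by linarith
  have h1 : (n:ℝ) ≤ p - 1 := Nat.floor_le h0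
  have h2 : p - 1 < n + 1 := Nat.lt_floor_add_one _
  have hq1 : 1 ≤ p - n := by linarith
  have hq2 : p - n ≤ 2 := by linarith
  calc c * (n.factorial : ℝ) ≤ Real.Gamma (p - n) * (n.factorial : ℝ) := by
        apply mul_le_mul_of_nonneg_right (hmin _ hq1 hq2) (by positivity)
    _ = (n.factorial : ℝ) * Real.Gamma (p - n) := by ring
    _ ≤ Real.Gamma ((p - n) + n) := aux_gamma_fac n (p - n) hq1
    _ = Real.Gamma p := by rw [sub_add_cancel]


lemma aux_summable {γ : ℝ} (hγ : 0 < γ) {a : ℝ} (ha : 0 ≤ a) :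
    Summable (fun k : ℕ => ((k:ℝ)+1) * a^k * (Real.Gamma ((k:ℝ)*γ+1))⁻¹) := by
  obtain ⟨c, hc, hlb⟩ := aux_gamma_lb
  set b : ℝ := max (a ^ γ⁻¹) 1 with hb
  have hb1 : (1:ℝ) ≤ b := le_max_right _ _
  have hb0 : (0:ℝ) < b := lt_of_lt_of_le one_pos hb1
  set r : ℝ := (1/2 : ℝ) ^ γ with hr
  have hr0 : 0 < r := Real.rpow_pos_of_pos (by norm_num) _
  have hr1 : r < 1 := Real.rpow_lt_one (by norm_num) (by norm_num) hγ
  have hak : ∀ k : ℕ, a^k ≤ b ^ (Nat.floor ((k:ℝ)*γ) + 1) := by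
    intro k
    have hkγ : (0:ℝ) ≤ (k:ℝ)*γ := by positivity
    have step2 : b ^ ((k:ℝ)*γ) ≤ b ^ (((Nat.floor ((k:ℝ)*γ) + 1 : ℕ) : ℝ)) := by
      apply Real.rpow_le_rpow_of_exponent_le hb1
      push_cast
      exact (Nat.lt_floor_add_one _).le
    have step3 : b ^ (((Nat.floor ((k:ℝ)*γ) + 1 : ℕ) : ℝ)) = b ^ (Nat.floor ((k:ℝ)*γ) + 1) :=
      Real.rpow_natCast _ _
    rcases eq_or_lt_of_le ha with h0 | hapos
    · rcases Nat.eq_zero_or_pos k with hk0 | hkpos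
      · subst hk0
        simpa using hb1
      · rw [← h0, zero_pow (Nat.pos_iff_ne_zero.mp hkpos)]
        positivity
    · have step1 : a^k ≤ b ^ ((k:ℝ)*γ) := by
        have heq : a^k = (a ^ γ⁻¹) ^ ((k:ℝ)*γ) := by
          rw [← Real.rpow_natCast a k, ← Real.rpow_mul ha]
          congr 1
          field_simp
        rw [heq]
        exact Real.rpow_le_rpow (Real.rpow_nonneg ha _) (le_max_left _ _) hkγ
      calc a^k ≤ b ^ ((k:ℝ)*γ) := step1
        _ ≤ _ := step3 ▸ step2
  have hΓ : ∀ k : ℕ, c * ((Nat.floor ((k:ℝ)*γ)).factorial : ℝ) ≤ Real.Gamma ((k:ℝ)*γ+1) := by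
    intro k
    have hkγ : (0:ℝ) ≤ (k:ℝ)*γ := by positivity
    have h1 : (1:ℝ) ≤ (k:ℝ)*γ+1 := by linarith
    simpa using hlb _ h1
  have hpe : ∀ n : ℕ, b^n / (n.factorial : ℝ) ≤ Real.exp (2*b) * (1/2:ℝ)^n := by
    intro n
    have h := Real.pow_div_factorial_le_exp (x := 2*b) (by positivity) n
    have heq : b^n / (n.factorial : ℝ) = ((2*b)^n / (n.factorial : ℝ)) * (1/2:ℝ)^n := by
      rw [mul_pow]
      field_simp
      rw [← mul_pow]; norm_num
    rw [heq]
    exact mul_le_mul_of_nonneg_right h (by positivity)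
  have hhalf : ∀ k : ℕ, ((1/2:ℝ))^(Nat.floor ((k:ℝ)*γ)) ≤ 2 * r^k := by
    intro k
    have h2 : (k:ℝ)*γ - 1 < (Nat.floor ((k:ℝ)*γ) : ℝ) := Nat.sub_one_lt_floor _
    have e1 : ((1/2:ℝ))^(Nat.floor ((k:ℝ)*γ)) = (1/2:ℝ)^((Nat.floor ((k:ℝ)*γ) : ℝ)) :=
      (Real.rpow_natCast _ _).symm
    have e2 : (1/2:ℝ)^((Nat.floor ((k:ℝ)*γ) : ℝ)) ≤ (1/2:ℝ)^((k:ℝ)*γ - 1) :=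
      Real.rpow_le_rpow_of_exponent_ge (by norm_num) (by norm_num) h2.le
    have e3 : r^k = (1/2:ℝ)^((k:ℝ)*γ) := by
      rw [hr, ← Real.rpow_natCast ((1/2:ℝ)^γ) k, ← Real.rpow_mul (by norm_num), mul_comm]
    have e4 : (1/2:ℝ)^((k:ℝ)*γ - 1) = 2 * (1/2:ℝ)^((k:ℝ)*γ) := by
      rw [Real.rpow_sub (by norm_num), Real.rpow_one]
      ring
    rw [e1, e3]
    linarith [e2, e4.symm.le]
  -- comparison
  set K : ℝ := 2 * b * Real.exp (2*b) / c with hK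
  have hmaj : Summable (fun k : ℕ => K * (((k:ℝ)+1) * r^k)) := by
    apply Summable.mul_left
    have A : Summable (fun k : ℕ => ((k:ℝ))^1 * r^k) := by
      apply summable_pow_mul_geometric_of_norm_lt_one
      rw [Real.norm_eq_abs, abs_of_pos hr0]; exact hr1
    have B : Summable (fun k : ℕ => r^k) := summable_geometric_of_lt_one hr0.le hr1
    exact (A.add B).congr (fun k => by ring)
  apply Summable.of_nonneg_of_le ?_ ?_ hmaj
  · intro k
    have : (0:ℝ) < Real.Gamma ((k:ℝ)*γ+1) := Real.Gamma_pos_of_pos (by positivity)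
    positivity
  · intro k
    set n := Nat.floor ((k:ℝ)*γ) with hn
    have hΓpos : (0:ℝ) < Real.Gamma ((k:ℝ)*γ+1) := Real.Gamma_pos_of_pos (by positivity)
    have hfpos : (0:ℝ) < c * (n.factorial : ℝ) := by positivity
    have hinv : (Real.Gamma ((k:ℝ)*γ+1))⁻¹ ≤ (c * (n.factorial : ℝ))⁻¹ :=
      inv_anti₀ hfpos (hΓ k)
    calc ((k:ℝ)+1) * a^k * (Real.Gamma ((k:ℝ)*γ+1))⁻¹
        ≤ ((k:ℝ)+1) * b^(n+1) * (c * (n.factorial : ℝ))⁻¹ := by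
          apply mul_le_mul
          · exact mul_le_mul_of_nonneg_left (hak k) (by positivity)
          · exact hinv
          · positivity
          · positivity
      _ = ((k:ℝ)+1) * (b / c) * (b^n / (n.factorial : ℝ)) := by
          rw [pow_succ]
          field_simp
      _ ≤ ((k:ℝ)+1) * (b / c) * (Real.exp (2*b) * (1/2:ℝ)^n) := by
          apply mul_le_mul_of_nonneg_left (hpe n) (by positivity)
      _ ≤ ((k:ℝ)+1) * (b / c) * (Real.exp (2*b) * (2 * r^k)) := by
          apply mul_le_mul_of_nonneg_left ?_ (by positivity)
          exact mul_le_mul_of_nonneg_left (hhalf k) (by positivity)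
      _ = K * (((k:ℝ)+1) * r^k) := by
          rw [hK]
          field_simp


lemma aux_cnorm {γ : ℝ} (hγ : 0 < γ) (k : ℕ) :
    ‖(Complex.Gamma (((k : ℝ) * γ + 1 : ℝ) : ℂ))⁻¹‖ = (Real.Gamma ((k:ℝ)*γ+1))⁻¹ := by
  have hpos : (0:ℝ) < (k:ℝ)*γ+1 := by positivity
  rw [Complex.Gamma_ofReal, ← Complex.ofReal_inv, Complex.norm_real, Real.norm_eq_abs,
    abs_of_pos (by exact inv_pos.mpr (Real.Gamma_pos_of_pos hpos))]

lemma aux_zpow {γ : ℝ} (w : ℂ) {s : ℝ} (hs : 0 < s) (k : ℕ) :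
    (-((s ^ γ : ℝ) : ℂ) * w) ^ k = (-w)^k * ((s ^ ((k:ℝ)*γ) : ℝ) : ℂ) := by
  rw [show -((s ^ γ : ℝ):ℂ) * w = (-w) * ((s^γ:ℝ):ℂ) by ring, mul_pow,
    ← Complex.ofReal_pow, ← Real.rpow_natCast (s^γ) k, ← Real.rpow_mul hs.le, mul_comm γ (k:ℝ)]

lemma aux_hasDerivAt {γ : ℝ} (hγ : 0 < γ) (w : ℂ) {x : ℝ} (hx : 0 < x) :
    HasDerivAt (fun s : ℝ => mlf γ 1 (-((s ^ γ : ℝ) : ℂ) * w))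
      (-w * ((x ^ (γ - 1) : ℝ) : ℂ) * mlf γ γ (-((x ^ γ : ℝ) : ℂ) * w)) x := by
  set c : ℕ → ℂ := fun k => (Complex.Gamma (((k : ℝ) * γ + 1 : ℝ) : ℂ))⁻¹ with hcdef
  set g : ℕ → ℝ → ℂ := fun k s => (-w)^k * c k * ((s ^ ((k:ℝ)*γ) : ℝ) : ℂ) with hgdef
  set g' : ℕ → ℝ → ℂ :=
    fun k s => (-w)^k * c k * ((((k:ℝ)*γ) * s ^ ((k:ℝ)*γ - 1) : ℝ) : ℂ) with hg'def
  set a : ℝ := ‖w‖ * (x*2)^γ with hadef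
  have ha : 0 ≤ a := by positivity
  set u : ℕ → ℝ :=
    fun k => (2*γ/x) * (((k:ℝ)+1) * a^k * (Real.Gamma ((k:ℝ)*γ+1))⁻¹) with hudef
  have hu : Summable u := (aux_summable hγ ha).mul_left _
  set sop : Set ℝ := Ioo (x/2) (x*2) with hsop
  have hmem : x ∈ sop := by constructor <;> [linarith; linarith]
  have hspos : ∀ s ∈ sop, (0:ℝ) < s := by
    intro s hs
    have := hs.1
    linarith
  -- derivative of each term
  have hg : ∀ k : ℕ, ∀ s ∈ sop, HasDerivAt (g k) (g' k s) s := by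
    intro k s hs
    have hs0 := hspos s hs
    have h1 : HasDerivAt (fun y : ℝ => y ^ ((k:ℝ)*γ)) (((k:ℝ)*γ) * s ^ ((k:ℝ)*γ - 1)) s :=
      Real.hasDerivAt_rpow_const (Or.inl hs0.ne')
    exact h1.ofReal_comp.const_mul ((-w)^k * c k)
  -- uniform bound
  have hbound : ∀ (k : ℕ), ∀ s ∈ sop, ‖g' k s‖ ≤ u k := by
    intro k s hs
    have hs0 := hspos s hs
    have hnorm : ‖g' k s‖
        = ‖w‖^k * (Real.Gamma ((k:ℝ)*γ+1))⁻¹ * ((k:ℝ)*γ * s ^ ((k:ℝ)*γ - 1)) := by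
      rw [hg'def]
      simp only []
      rw [norm_mul, norm_mul, norm_pow, norm_neg, aux_cnorm hγ k, Complex.norm_real,
        Real.norm_eq_abs, abs_of_nonneg
          (mul_nonneg (by positivity) (Real.rpow_nonneg hs0.le _))]
    have h2 : s ^ ((k:ℝ)*γ - 1) ≤ (x*2) ^ ((k:ℝ)*γ) * (2/x) := by
      have e : s ^ ((k:ℝ)*γ - 1) = s ^ ((k:ℝ)*γ) * s⁻¹ := by
        rw [Real.rpow_sub hs0, Real.rpow_one, div_eq_mul_inv]
      rw [e]
      have hinv : s⁻¹ ≤ 2/x := by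
        have h3 : s⁻¹ ≤ (x/2)⁻¹ := inv_anti₀ (by positivity) hs.1.le
        rwa [inv_div] at h3
      exact mul_le_mul (Real.rpow_le_rpow hs0.le hs.2.le (by positivity)) hinv
        (inv_nonneg.mpr hs0.le) (Real.rpow_nonneg (by positivity) _)
    have hxc : (x*2) ^ ((k:ℝ)*γ) = ((x*2)^γ)^k := by
      rw [← Real.rpow_natCast ((x*2)^γ) k, ← Real.rpow_mul (by positivity), mul_comm γ (k:ℝ)]
    have hΓ0 : (0:ℝ) ≤ (Real.Gamma ((k:ℝ)*γ+1))⁻¹ :=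
      inv_nonneg.mpr (Real.Gamma_pos_of_pos (by positivity)).le
    calc ‖g' k s‖ = ‖w‖^k * (Real.Gamma ((k:ℝ)*γ+1))⁻¹ * ((k:ℝ)*γ * s ^ ((k:ℝ)*γ - 1)) := hnorm
      _ ≤ ‖w‖^k * (Real.Gamma ((k:ℝ)*γ+1))⁻¹ * ((k:ℝ)*γ * ((x*2) ^ ((k:ℝ)*γ) * (2/x))) := by
          apply mul_le_mul_of_nonneg_left ?_ (by positivity)
          exact mul_le_mul_of_nonneg_left h2 (by positivity)
      _ = (2*γ/x) * ((k:ℝ) * a^k * (Real.Gamma ((k:ℝ)*γ+1))⁻¹) := by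
          rw [hxc, hadef, mul_pow]
          field_simp
      _ ≤ u k := by
          rw [hudef]
          apply mul_le_mul_of_nonneg_left ?_ (by positivity)
          apply mul_le_mul_of_nonneg_right ?_ hΓ0
          apply mul_le_mul_of_nonneg_right (by linarith) (by positivity)
  -- summability of g at positive points
  have hsumg : ∀ s : ℝ, 0 < s → Summable (fun k => g k s) := by
    intro s hs0
    apply Summable.of_norm
    apply Summable.of_nonneg_of_le (fun k => norm_nonneg _)
      ?_ ((aux_summable hγ (a := ‖w‖ * s^γ) (by positivity)))
    intro k
    have hnorm : ‖g k s‖ = ‖w‖^k * (Real.Gamma ((k:ℝ)*γ+1))⁻¹ * s ^ ((k:ℝ)*γ) := by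
      rw [hgdef]
      simp only []
      rw [norm_mul, norm_mul, norm_pow, norm_neg, aux_cnorm hγ k, Complex.norm_real,
        Real.norm_eq_abs, abs_of_nonneg (Real.rpow_nonneg hs0.le _)]
    have hsc : s ^ ((k:ℝ)*γ) = (s^γ)^k := by
      rw [← Real.rpow_natCast (s^γ) k, ← Real.rpow_mul hs0.le, mul_comm γ (k:ℝ)]
    rw [hnorm, hsc]
    have hΓ0 : (0:ℝ) ≤ (Real.Gamma ((k:ℝ)*γ+1))⁻¹ :=
      inv_nonneg.mpr (Real.Gamma_pos_of_pos (by positivity)).le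
    calc ‖w‖^k * (Real.Gamma ((k:ℝ)*γ+1))⁻¹ * (s^γ)^k
        = 1 * ((‖w‖ * s^γ)^k * (Real.Gamma ((k:ℝ)*γ+1))⁻¹) := by rw [mul_pow]; ring
      _ ≤ ((k:ℝ)+1) * ((‖w‖ * s^γ)^k * (Real.Gamma ((k:ℝ)*γ+1))⁻¹) := by
          apply mul_le_mul_of_nonneg_right (by linarith [Nat.cast_nonneg (α := ℝ) k])
          positivity
      _ = ((k:ℝ)+1) * (‖w‖ * s^γ)^k * (Real.Gamma ((k:ℝ)*γ+1))⁻¹ := by ring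
  -- the tsum of g has the desired derivative
  have hG : HasDerivAt (fun s => ∑' k, g k s) (∑' k, g' k x) x := by
    apply hasDerivAt_of_tendstoUniformlyOn (f := fun (T : Finset ℕ) (s : ℝ) => ∑ k ∈ T, g k s)
      isOpen_Ioo (tendstoUniformlyOn_tsum hu hbound) ?_ ?_ hmem
    · filter_upwards with T s hs
      exact HasDerivAt.fun_sum (fun k _ => hg k s hs)
    · intro s hs
      exact (hsumg s (hspos s hs)).hasSum
  -- mlf equals the tsum of g near x
  have hF : HasDerivAt (fun s : ℝ => mlf γ 1 (-((s ^ γ : ℝ) : ℂ) * w)) (∑' k, g' k x) x := by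
    apply hG.congr_of_eventuallyEq
    filter_upwards [IsOpen.mem_nhds isOpen_Ioi hx] with s hs
    unfold mlf
    apply tsum_congr
    intro k
    rw [aux_zpow w hs k, hgdef]
    ring
  -- identify the derivative
  have hkey : (∑' k, g' k x)
      = -w * ((x ^ (γ - 1) : ℝ) : ℂ) * mlf γ γ (-((x ^ γ : ℝ) : ℂ) * w) := by
    have hsum' : Summable (fun k => g' k x) :=
      Summable.of_norm (Summable.of_nonneg_of_le (fun k => norm_nonneg _)
        (fun k => hbound k x hmem) hu)
    rw [Summable.tsum_eq_zero_add hsum']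
    have h0 : g' 0 x = 0 := by
      rw [hg'def]
      simp
    rw [h0, zero_add]
    have hterm : ∀ k : ℕ, g' (k+1) x
        = (-w * ((x ^ (γ - 1) : ℝ) : ℂ))
          * ((Complex.Gamma (((k : ℝ) * γ + γ : ℝ) : ℂ))⁻¹ * (-((x ^ γ : ℝ) : ℂ) * w) ^ k) := by
      intro k
      have hkγ : (0:ℝ) < ((k:ℝ)+1)*γ := by positivity
      have hΓr : Real.Gamma (((k:ℝ)+1)*γ + 1) = (((k:ℝ)+1)*γ) * Real.Gamma (((k:ℝ)+1)*γ) :=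
        Real.Gamma_add_one hkγ.ne'
      have hΓpos : (0:ℝ) < Real.Gamma (((k:ℝ)+1)*γ) := Real.Gamma_pos_of_pos hkγ
      have hΓpos1 : (0:ℝ) < Real.Gamma (((k:ℝ)+1)*γ + 1) := Real.Gamma_pos_of_pos (by positivity)
      have hpow : x ^ ((((k:ℕ)+1:ℕ):ℝ)*γ - 1) = x ^ (γ - 1) * x ^ ((k:ℝ)*γ) := by
        rw [← Real.rpow_add hx]
        push_cast
        ring_nf
      have hkey2 : (Complex.Gamma (((((k:ℕ)+1:ℕ):ℝ)*γ + 1 : ℝ):ℂ))⁻¹ * (((((k:ℕ)+1:ℕ):ℝ)*γ : ℝ):ℂ)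
          = (Complex.Gamma (((k : ℝ) * γ + γ : ℝ) : ℂ))⁻¹ := by
        rw [Complex.Gamma_ofReal, Complex.Gamma_ofReal, ← Complex.ofReal_inv,
          ← Complex.ofReal_inv, ← Complex.ofReal_mul]
        congr 1
        have e1 : ((k:ℝ)*γ + γ) = ((k:ℝ)+1)*γ := by ring
        have e2 : ((((k:ℕ)+1:ℕ):ℝ)) = (k:ℝ)+1 := by push_cast; ring
        rw [e1, e2, hΓr]
        field_simp
      rw [hg'def]
      simp only []
      rw [hpow, aux_zpow w hx k, hcdef]
      simp only []
      push_cast at hkey2 ⊢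
      linear_combination ((-w)^(k+1) * ((x ^ (γ-1) : ℝ):ℂ) * ((x ^ ((k:ℝ)*γ) : ℝ):ℂ)) * hkey2
    rw [tsum_congr hterm, tsum_mul_left]
    unfold mlf
    rfl
  rw [← hkey]
  exact hF

/-- `|e_{γ,1}(-t^γ w) − e_{γ,1}(-(t+τ)^γ w)| ≤ C t⁻¹ τ`
for all `w` with `Re w ≥ 0` and all `t, τ > 0`. -/
theorem stmt18 (γ C₀ : ℝ) (hγ : γ ∈ Set.Ioo (0 : ℝ) 1) (hC₀ : 0 < C₀)
    (hml : ∀ ζ : ℂ, ζ.re ≤ 0 → ‖mlf γ γ ζ‖ ≤ C₀ / (1 + ‖ζ‖)) :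
    ∃ C : ℝ, 0 < C ∧ ∀ w : ℂ, 0 ≤ w.re → ∀ t τ : ℝ, 0 < t → 0 < τ →
      ‖mlf γ 1 (-((t ^ γ : ℝ) : ℂ) * w)
          - mlf γ 1 (-(((t + τ) ^ γ : ℝ) : ℂ) * w)‖
        ≤ C * t⁻¹ * τ := by
  obtain ⟨hγ0, hγ1⟩ := hγ
  refine ⟨C₀, hC₀, ?_⟩
  intro w hw t τ ht hτ
  set F : ℝ → ℂ := fun s => mlf γ 1 (-((s ^ γ : ℝ) : ℂ) * w) with hFdef
  set F' : ℝ → ℂ :=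
    fun s => -w * ((s ^ (γ - 1) : ℝ) : ℂ) * mlf γ γ (-((s ^ γ : ℝ) : ℂ) * w) with hF'def
  have hderiv : ∀ s ∈ Icc t (t+τ), HasDerivWithinAt F (F' s) (Icc t (t+τ)) s := by
    intro s hs
    exact (aux_hasDerivAt hγ0 w (lt_of_lt_of_le ht hs.1)).hasDerivWithinAt
  have hbound : ∀ s ∈ Icc t (t+τ), ‖F' s‖ ≤ C₀ / t := by
    intro s hs
    have hs0 : 0 < s := lt_of_lt_of_le ht hs.1
    have hrp : (0:ℝ) < s ^ γ := Real.rpow_pos_of_pos hs0 _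
    have hζre : (-((s ^ γ : ℝ) : ℂ) * w).re ≤ 0 := by
      rw [show -((s ^ γ : ℝ) : ℂ) = (((-(s^γ) : ℝ)) : ℂ) by push_cast; ring,
        Complex.re_ofReal_mul]
      exact mul_nonpos_of_nonpos_of_nonneg (by linarith) hw
    have hml' := hml _ hζre
    have habs : ‖-((s ^ γ : ℝ) : ℂ) * w‖ = s^γ * ‖w‖ := by
      rw [norm_mul, norm_neg, Complex.norm_real, Real.norm_eq_abs, abs_of_pos hrp]
    rw [habs] at hml'
    have hnorm : ‖F' s‖ = ‖w‖ * s ^ (γ-1) * ‖mlf γ γ (-((s ^ γ : ℝ) : ℂ) * w)‖ := by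
      rw [hF'def]
      simp only []
      rw [norm_mul, norm_mul, norm_neg, Complex.norm_real,
        Real.norm_eq_abs, abs_of_nonneg (Real.rpow_nonneg hs0.le _)]
    have hA : (0:ℝ) ≤ s^γ * ‖w‖ := by positivity
    have habs_norm : ‖w‖ = ‖w‖ := rfl
    calc ‖F' s‖ = ‖w‖ * s ^ (γ-1) * ‖mlf γ γ (-((s ^ γ : ℝ) : ℂ) * w)‖ := hnorm
      _ ≤ ‖w‖ * s ^ (γ-1) * (C₀ / (1 + s^γ * ‖w‖)) := by
          apply mul_le_mul_of_nonneg_left hml'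
          positivity
      _ = (C₀ / s) * ((s^γ * ‖w‖) / (1 + s^γ * ‖w‖)) := by
          rw [← habs_norm, Real.rpow_sub hs0, Real.rpow_one]
          have h1 : (0:ℝ) < 1 + s^γ * ‖w‖ := by positivity
          field_simp
      _ ≤ (C₀ / s) * 1 := by
          apply mul_le_mul_of_nonneg_left ?_ (by positivity)
          rw [div_le_one (by rw [← habs_norm] at *; positivity)]
          linarith [mul_nonneg hrp.le (norm_nonneg w)]
      _ = C₀ / s := mul_one _
      _ ≤ C₀ / t := by
          apply div_le_div_of_nonneg_left hC₀.le ht hs.1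
  have hmvt := Convex.norm_image_sub_le_of_norm_hasDerivWithin_le hderiv hbound
    (convex_Icc t (t+τ)) (show t + τ ∈ Icc t (t+τ) by constructor <;> linarith)
    (show t ∈ Icc t (t+τ) by constructor <;> linarith)
  have : ‖t - (t+τ)‖ = τ := by
    rw [Real.norm_eq_abs, show t - (t+τ) = -τ by ring, abs_neg, abs_of_pos hτ]
  rw [this] at hmvt
  calc ‖mlf γ 1 (-((t ^ γ : ℝ) : ℂ) * w) - mlf γ 1 (-(((t + τ) ^ γ : ℝ) : ℂ) * w)‖
      = ‖F t - F (t+τ)‖ := rfl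
    _ ≤ C₀ / t * τ := hmvt
    _ = C₀ * t⁻¹ * τ := by rw [div_eq_mul_inv]
end
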